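/- arXiv:2205.07189 — 6 statements merged into one kernel-verified Lean document; each statement's English description precedes it below -/
import Mathlib

section
/- For every finite simple graph G, the vi-simultaneous chromatic number of G equals the chromatic number of the graph G^{3/3}, i.e., χ_vi(G) = χ(G^{3/3}). -/
open SimpleGraph

variable {V : Type*}

/-- An *incidence* of `G`: a pair `(v, e)` where `e` is an edge of `G` and `v ∈ e`. -/
abbrev Inc (G : SimpleGraph V) : Type _ :=
  {p : V × Sym2 V // p.2 ∈ G.edgeSet ∧ p.1 ∈ p.2}

/-- The elements to be colored in a vi-simultaneous coloring: vertices together with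
incidences. -/
abbrev VIElem (G : SimpleGraph V) : Type _ := V ⊕ Inc G

/-- Adjacency between elements of `V(G) ∪ I(G)`: two vertices are adjacent when they are
adjacent in `G`; a vertex `u` and an incidence `(w, f)` are adjacent when `u ∈ f`; two
distinct incidences `(v, e)`, `(w, f)` are adjacent when `v = w`, or `e = f`, or
`{v, w} = e`, or `{v, w} = f`. -/
def VIAdj (G : SimpleGraph V) : VIElem G → VIElem G → Prop
  | Sum.inl u, Sum.inl w => G.Adj u w
  | Sum.inl u, Sum.inr i => u ∈ i.1.2
  | Sum.inr i, Sum.inl u => u ∈ i.1.2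
  | Sum.inr i, Sum.inr j => i ≠ j ∧
      (i.1.1 = j.1.1 ∨ i.1.2 = j.1.2 ∨ s(i.1.1, j.1.1) = i.1.2 ∨ s(i.1.1, j.1.1) = j.1.2)

/-- A vi-simultaneous proper `k`-coloring of `G`: adjacent or incident elements of
`V(G) ∪ I(G)` receive distinct colors. -/
def IsVIColoring (G : SimpleGraph V) {k : ℕ} (c : VIElem G → Fin k) : Prop :=
  ∀ a b, VIAdj G a b → c a ≠ c b

/-- The vi-simultaneous chromatic number `χ_vi(G)`: the least `k` admitting a
vi-simultaneous proper `k`-coloring. -/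
noncomputable def chiVI (G : SimpleGraph V) : ℕ :=
  sInf {k | ∃ c : VIElem G → Fin k, IsVIColoring G c}

/-- `I₂(v)`: the set of second incidences of a vertex `v`, i.e. incidences `(u, e)` with
`e = {u, v}` and `u ≠ v`. -/
def I2 (G : SimpleGraph V) (v : V) : Set (Inc G) :=
  {i | i.1.1 ≠ v ∧ i.1.2 = s(i.1.1, v)}

/-- A vi-simultaneous `(k, s)`-coloring: a vi-simultaneous proper `k`-coloring in which at
most `s` distinct colors appear on `I₂(v)` for every vertex `v`. -/
def IsVISColoring (G : SimpleGraph V) (s : ℕ) {k : ℕ} (c : VIElem G → Fin k) : Prop :=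
  IsVIColoring G c ∧ ∀ v : V, ((fun i => c (Sum.inr i)) '' I2 G v).ncard ≤ s

/-- `χ_{vi,s}(G)`: the least `k` admitting a vi-simultaneous `(k, s)`-coloring. -/
noncomputable def chiVIS (G : SimpleGraph V) (s : ℕ) : ℕ :=
  sInf {k | ∃ c : VIElem G → Fin k, IsVISColoring G s c}

/-- The maximum degree `Δ(G)` of a finite graph. -/
noncomputable def maxDeg [Fintype V] (G : SimpleGraph V) : ℕ :=
  Finset.univ.sup fun v => (G.neighborSet v).ncard

/-- Internal vertices of the 3-subdivision: `(u, v)` with `u ~ v` represents the internal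
vertex `(uv)₁` of the path replacing the edge `{u, v}`, the one nearer to `u`
(and `(uv)₂ = (vu)₁`). -/
abbrev IVert (G : SimpleGraph V) : Type _ := {p : V × V // G.Adj p.1 p.2}

/-- The 3-subdivision `G^{1/3}` of `G`: each edge `{u, v}` is replaced by the path
`u, (uv)₁, (vu)₁, v` of length 3. -/
def subdiv3 (G : SimpleGraph V) : SimpleGraph (V ⊕ IVert G) where
  Adj x y :=
    match x, y with
    | Sum.inl _, Sum.inl _ => False
    | Sum.inl u, Sum.inr i => u = i.1.1
    | Sum.inr i, Sum.inl u => u = i.1.1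
    | Sum.inr i, Sum.inr j => i.1.1 = j.1.2 ∧ i.1.2 = j.1.1
  symm := by
    constructor
    rintro (u | i) (w | j) h
    · exact h.elim
    · exact h
    · exact h
    · exact ⟨h.2.symm, h.1.symm⟩
  loopless := by
    constructor
    rintro (u | i) h
    · exact h.elim
    · exact G.loopless.irrefl i.1.2 (h.1 ▸ i.2)

/-- The 3rd power of a graph: two distinct vertices are adjacent iff their distance is at
most 3, i.e. iff they are joined by a walk of length at most 3. -/
def power3 {W : Type*} (H : SimpleGraph W) : SimpleGraph W where
  Adj x y := x ≠ y ∧ ∃ w : H.Walk x y, w.length ≤ 3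
  symm := by
    constructor
    rintro x y ⟨hxy, w, hw⟩
    exact ⟨hxy.symm, w.reverse, by simpa using hw⟩
  loopless := by
    constructor
    rintro x ⟨hxy, -⟩
    exact hxy rfl

section Aux

variable [DecidableEq V] (G : SimpleGraph V)

lemma inc_adj (i : Inc G) : G.Adj i.1.1 (Sym2.Mem.other' i.2.2) := by
  have h := Sym2.other_spec' i.2.2
  rw [← G.mem_edgeSet, h]
  exact i.2.1

/-- The correspondence from `V(G) ∪ I(G)` to the vertices of the 3-subdivision. -/
def toIV : VIElem G → V ⊕ IVert G
  | Sum.inl v => Sum.inl v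
  | Sum.inr i => Sum.inr ⟨(i.1.1, Sym2.Mem.other' i.2.2), inc_adj G i⟩

/-- The inverse correspondence. -/
def ofIV : V ⊕ IVert G → VIElem G
  | Sum.inl v => Sum.inl v
  | Sum.inr p => Sum.inr ⟨(p.1.1, s(p.1.1, p.1.2)),
      ⟨G.mem_edgeSet.2 p.2, Sym2.mem_mk_left _ _⟩⟩

lemma toIV_ofIV (x : V ⊕ IVert G) : toIV G (ofIV G x) = x := by
  rcases x with v | ⟨⟨a, b⟩, hab⟩
  · rfl
  · simp only [toIV, ofIV]
    have h : ∀ (h : a ∈ s(a, b)), Sym2.Mem.other' h = b :=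
      fun h => Sym2.congr_right.1 (Sym2.other_spec' h)
    congr 1
    exact Subtype.ext (Prod.ext_iff.2 ⟨rfl, h (Sym2.mem_mk_left a b)⟩)

lemma ofIV_toIV (a : VIElem G) : ofIV G (toIV G a) = a := by
  rcases a with v | ⟨⟨a, e⟩, he, ha⟩
  · rfl
  · simp only [toIV, ofIV]
    congr 1
    exact Subtype.ext (Prod.ext_iff.2 ⟨rfl, Sym2.other_spec' ha⟩)

lemma walk3_iff {W : Type*} (H : SimpleGraph W) (x y : W) :
    (∃ w : H.Walk x y, w.length ≤ 3) ↔
      (x = y ∨ H.Adj x y ∨ (∃ z, H.Adj x z ∧ H.Adj z y) ∨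
        ∃ z z', H.Adj x z ∧ H.Adj z z' ∧ H.Adj z' y) := by
  constructor
  · rintro ⟨w, hw⟩
    match w with
    | .nil => exact Or.inl rfl
    | .cons h .nil => exact Or.inr (Or.inl h)
    | .cons h (.cons h' .nil) => exact Or.inr (Or.inr (Or.inl ⟨_, h, h'⟩))
    | .cons h (.cons h' (.cons h'' q)) =>
      cases q with
      | nil => exact Or.inr (Or.inr (Or.inr ⟨_, _, h, h', h''⟩))
      | cons h3 q' => simp [SimpleGraph.Walk.length_cons] at hw; omega
  · rintro (rfl | h | ⟨z, h1, h2⟩ | ⟨z, z', h1, h2, h3⟩)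
    · exact ⟨.nil, by simp⟩
    · exact ⟨.cons h .nil, by simp⟩
    · exact ⟨.cons h1 (.cons h2 .nil), by simp⟩
    · exact ⟨.cons h1 (.cons h2 (.cons h3 .nil)), by simp⟩

lemma power3_adj_iff {W : Type*} (H : SimpleGraph W) (x y : W) :
    (power3 H).Adj x y ↔ x ≠ y ∧ (H.Adj x y ∨ (∃ z, H.Adj x z ∧ H.Adj z y) ∨
        ∃ z z', H.Adj x z ∧ H.Adj z z' ∧ H.Adj z' y) := by
  constructor
  · rintro ⟨hne, hw⟩
    refine ⟨hne, ?_⟩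
    rcases (walk3_iff H x y).1 hw with h | h
    · exact absurd h hne
    · exact h
  · rintro ⟨hne, h⟩
    exact ⟨hne, (walk3_iff H x y).2 (Or.inr h)⟩

lemma toIV_injective : Function.Injective (toIV G) :=
  Function.LeftInverse.injective (ofIV_toIV G)

lemma viadj_iff_inl_inr (u : V) (j : Inc G) :
    VIAdj G (Sum.inl u) (Sum.inr j) ↔
      (power3 (subdiv3 G)).Adj (toIV G (Sum.inl u)) (toIV G (Sum.inr j)) := by
  have hspec : s(j.1.1, Sym2.Mem.other' j.2.2) = j.1.2 := Sym2.other_spec' j.2.2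
  have hadj : G.Adj j.1.1 (Sym2.Mem.other' j.2.2) := inc_adj G j
  rw [power3_adj_iff]
  simp only [toIV]
  constructor
  · intro h
    have hmem : u ∈ s(j.1.1, Sym2.Mem.other' j.2.2) := by rw [hspec]; exact h
    refine ⟨fun e => Sum.inl_ne_inr e, ?_⟩
    rcases Sym2.mem_iff.1 hmem with hu | hu
    · exact Or.inl hu
    · refine Or.inr (Or.inl
        ⟨Sum.inr ⟨(Sym2.Mem.other' j.2.2, j.1.1), hadj.symm⟩, ?_, ?_⟩)
      · exact hu
      · exact ⟨rfl, rfl⟩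
  · rintro ⟨hne, h | ⟨z, h1, h2⟩ | ⟨z, z', h1, h2, h3⟩⟩
    · have h' : u = j.1.1 := h
      show u ∈ j.1.2
      rw [← hspec, h']; exact Sym2.mem_mk_left _ _
    · rcases z with t | p
      · exact ((h1 : False)).elim
      · have h1' : u = p.1.1 := h1
        have h2' : p.1.1 = Sym2.Mem.other' j.2.2 ∧ p.1.2 = j.1.1 := h2
        show u ∈ j.1.2
        rw [← hspec, h1', h2'.1]; exact Sym2.mem_mk_right _ _
    · rcases z with t | p
      · exact ((h1 : False)).elim
      · rcases z' with t | q
        · have h1' : u = p.1.1 := h1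
          have h2' : t = p.1.1 := h2
          have h3' : t = j.1.1 := h3
          show u ∈ j.1.2
          rw [← hspec, h1', ← h2', h3']; exact Sym2.mem_mk_left _ _
        · have h1' : u = p.1.1 := h1
          have h2' : p.1.1 = q.1.2 ∧ p.1.2 = q.1.1 := h2
          have h3' : q.1.1 = Sym2.Mem.other' j.2.2 ∧ q.1.2 = j.1.1 := h3
          show u ∈ j.1.2
          rw [← hspec, h1', h2'.1, h3'.2]; exact Sym2.mem_mk_left _ _

lemma inc_ext {i j : Inc G} (h1 : i.1.1 = j.1.1) (h2 : i.1.2 = j.1.2) : i = j :=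
  Subtype.ext (Prod.ext_iff.2 ⟨h1, h2⟩)

lemma viadj_iff (a b : VIElem G) :
    VIAdj G a b ↔ (power3 (subdiv3 G)).Adj (toIV G a) (toIV G b) := by
  rcases a with u | i <;> rcases b with w | j
  · -- vertex / vertex
    rw [power3_adj_iff]
    simp only [toIV]
    constructor
    · intro h
      have h' : G.Adj u w := h
      refine ⟨fun e => h'.ne (Sum.inl.inj e), Or.inr (Or.inr
        ⟨Sum.inr ⟨(u, w), h'⟩, Sum.inr ⟨(w, u), h'.symm⟩, ?_, ?_, ?_⟩)⟩
      · exact rfl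
      · exact ⟨rfl, rfl⟩
      · exact rfl
    · rintro ⟨hne, h | ⟨z, h1, h2⟩ | ⟨z, z', h1, h2, h3⟩⟩
      · exact ((h : False)).elim
      · rcases z with t | p
        · exact ((h1 : False)).elim
        · have h1' : u = p.1.1 := h1
          have h2' : w = p.1.1 := h2
          exact absurd (congrArg Sum.inl (h1'.trans h2'.symm)) hne
      · rcases z with t | p
        · exact ((h1 : False)).elim
        · rcases z' with t | q
          · exact ((h3 : False)).elim
          · have h1' : u = p.1.1 := h1
            have h2' : p.1.1 = q.1.2 ∧ p.1.2 = q.1.1 := h2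
            have h3' : w = q.1.1 := h3
            show G.Adj u w
            have hp := p.2
            rw [← h1', h2'.2, ← h3'] at hp
            exact hp
  · exact viadj_iff_inl_inr G u j
  · rw [SimpleGraph.adj_comm]
    exact viadj_iff_inl_inr G w i
  · -- incidence / incidence
    have hispec : s(i.1.1, Sym2.Mem.other' i.2.2) = i.1.2 := Sym2.other_spec' i.2.2
    have hiadj : G.Adj i.1.1 (Sym2.Mem.other' i.2.2) := inc_adj G i
    have hjspec : s(j.1.1, Sym2.Mem.other' j.2.2) = j.1.2 := Sym2.other_spec' j.2.2
    have hjadj : G.Adj j.1.1 (Sym2.Mem.other' j.2.2) := inc_adj G j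
    rw [power3_adj_iff]
    simp only [toIV]
    constructor
    · rintro ⟨hij, hcase⟩
      refine ⟨fun e => hij (Sum.inr.inj (toIV_injective G e)), ?_⟩
      rcases hcase with h | h | h | h
      · -- i.1.1 = j.1.1
        refine Or.inr (Or.inl ⟨Sum.inl i.1.1, ?_, ?_⟩)
        · exact rfl
        · exact h
      · -- i.1.2 = j.1.2
        have heq : s(i.1.1, Sym2.Mem.other' i.2.2) = s(j.1.1, Sym2.Mem.other' j.2.2) := by
          rw [hispec, hjspec, h]
        rcases Sym2.eq_iff.1 heq with ⟨e1, e2⟩ | ⟨e1, e2⟩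
        · exact absurd (inc_ext G e1 h) hij
        · exact Or.inl ⟨e1, e2⟩
      · -- s(i.1.1, j.1.1) = i.1.2
        have heq : s(i.1.1, j.1.1) = s(i.1.1, Sym2.Mem.other' i.2.2) := by
          rw [hispec, h]
        rcases Sym2.eq_iff.1 heq with ⟨e1, e2⟩ | ⟨e1, e2⟩
        · refine Or.inr (Or.inr ⟨Sum.inr ⟨(Sym2.Mem.other' i.2.2, i.1.1), hiadj.symm⟩,
            Sum.inl (Sym2.Mem.other' i.2.2), ?_, ?_, ?_⟩)
          · exact ⟨rfl, rfl⟩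
          · exact rfl
          · exact e2.symm
        · exact absurd e1 hiadj.ne
      · -- s(i.1.1, j.1.1) = j.1.2
        have heq : s(i.1.1, j.1.1) = s(j.1.1, Sym2.Mem.other' j.2.2) := by
          rw [hjspec, h]
        rcases Sym2.eq_iff.1 heq with ⟨e1, e2⟩ | ⟨e1, e2⟩
        · exact absurd e2 hjadj.ne
        · have havw : G.Adj i.1.1 j.1.1 := by
            rw [← G.mem_edgeSet, h]; exact j.2.1
          refine Or.inr (Or.inr ⟨Sum.inl i.1.1, Sum.inr ⟨(i.1.1, j.1.1), havw⟩,
            ?_, ?_, ?_⟩)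
          · exact rfl
          · exact rfl
          · exact ⟨e1, rfl⟩
    · rintro ⟨hne, hcase⟩
      refine ⟨fun e => hne (congrArg (toIV G) (congrArg Sum.inr e)), ?_⟩
      rcases hcase with h | ⟨z, h1, h2⟩ | ⟨z, z', h1, h2, h3⟩
      · have h' : i.1.1 = Sym2.Mem.other' j.2.2 ∧ Sym2.Mem.other' i.2.2 = j.1.1 := h
        refine Or.inr (Or.inr (Or.inl ?_))
        rw [← hispec]
        exact Sym2.eq_iff.2 (Or.inl ⟨rfl, h'.2.symm⟩)
      · rcases z with t | p
        · have h1' : t = i.1.1 := h1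
          have h2' : t = j.1.1 := h2
          exact Or.inl (h1'.symm.trans h2')
        · have h1' : i.1.1 = p.1.2 ∧ Sym2.Mem.other' i.2.2 = p.1.1 := h1
          have h2' : p.1.1 = Sym2.Mem.other' j.2.2 ∧ p.1.2 = j.1.1 := h2
          refine Or.inr (Or.inl ?_)
          rw [← hispec, ← hjspec]
          exact Sym2.eq_iff.2 (Or.inl ⟨h1'.1.trans h2'.2, h1'.2.trans h2'.1⟩)
      · rcases z with t | p
        · rcases z' with t' | q
          · exact ((h2 : False)).elim
          · have h1' : t = i.1.1 := h1
            have h2' : t = q.1.1 := h2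
            have h3' : q.1.1 = Sym2.Mem.other' j.2.2 ∧ q.1.2 = j.1.1 := h3
            refine Or.inr (Or.inr (Or.inr ?_))
            rw [← hjspec]
            exact Sym2.eq_iff.2 (Or.inr ⟨h1'.symm.trans (h2'.trans h3'.1), rfl⟩)
        · rcases z' with t' | q
          · have h1' : i.1.1 = p.1.2 ∧ Sym2.Mem.other' i.2.2 = p.1.1 := h1
            have h2' : t' = p.1.1 := h2
            have h3' : t' = j.1.1 := h3
            refine Or.inr (Or.inr (Or.inl ?_))
            rw [← hispec]
            exact Sym2.eq_iff.2 (Or.inl ⟨rfl, h3'.symm.trans (h2'.trans h1'.2.symm)⟩)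
          · have h1' : i.1.1 = p.1.2 ∧ Sym2.Mem.other' i.2.2 = p.1.1 := h1
            have h2' : p.1.1 = q.1.2 ∧ p.1.2 = q.1.1 := h2
            have h3' : q.1.1 = Sym2.Mem.other' j.2.2 ∧ q.1.2 = j.1.1 := h3
            refine Or.inr (Or.inr (Or.inr ?_))
            rw [← hjspec]
            exact Sym2.eq_iff.2 (Or.inr ⟨(h1'.1.trans h2'.2).trans h3'.1, rfl⟩)

lemma colorable_iff (k : ℕ) :
    (∃ c : VIElem G → Fin k, IsVIColoring G c) ↔ (power3 (subdiv3 G)).Colorable k := by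
  constructor
  · rintro ⟨c, hc⟩
    refine ⟨SimpleGraph.Coloring.mk (fun x => c (ofIV G x)) ?_⟩
    intro x y hxy
    refine hc _ _ ((viadj_iff G (ofIV G x) (ofIV G y)).2 ?_)
    rwa [toIV_ofIV, toIV_ofIV]
  · rintro ⟨C⟩
    exact ⟨fun a => C (toIV G a), fun a b h => C.valid ((viadj_iff G a b).1 h)⟩

end Aux

/-- For every finite simple graph `G`, the vi-simultaneous chromatic
number of `G` equals the chromatic number of `G^{3/3}`, the 3rd power of the
3-subdivision of `G`. -/
theorem chiVI_eq_chromaticNumber_power3_subdiv3 {V : Type*} [Fintype V] [DecidableEq V]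
    (G : SimpleGraph V) :
    (chiVI G : ℕ∞) = (power3 (subdiv3 G)).chromaticNumber := by
  have : Finite (V ⊕ IVert G) := by infer_instance
  cases nonempty_fintype (V ⊕ IVert G)
  have hc : (power3 (subdiv3 G)).Colorable (Fintype.card (V ⊕ IVert G)) :=
    (power3 (subdiv3 G)).colorable_of_fintype
  have hset : {k | ∃ c : VIElem G → Fin k, IsVIColoring G c} =
      {n | (power3 (subdiv3 G)).Colorable n} := by
    ext k
    exact colorable_iff G k
  rw [hc.chromaticNumber_eq_sInf]
  unfold chiVI
  rw [hset]
end

section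
/- For every finite simple graph G, χ_vi(G) ≤ χ''(G) + st(G), where χ''(G) is the total chromatic number of G and st(G) is the star arboricity of G. -/
open SimpleGraph

variable {V : Type*}

/-- A proper total `k`-coloring of `G`: adjacent vertices, incident vertex/edge pairs, and
distinct edges sharing an endpoint all receive distinct colors. -/
def IsTotalColoring (G : SimpleGraph V) {k : ℕ} (c : V ⊕ G.edgeSet → Fin k) : Prop :=
  (∀ u w, G.Adj u w → c (Sum.inl u) ≠ c (Sum.inl w)) ∧
  (∀ (v : V) (e : G.edgeSet), v ∈ (e : Sym2 V) → c (Sum.inl v) ≠ c (Sum.inr e)) ∧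
  (∀ e f : G.edgeSet, e ≠ f → (∃ v : V, v ∈ (e : Sym2 V) ∧ v ∈ (f : Sym2 V)) →
    c (Sum.inr e) ≠ c (Sum.inr f))

/-- The total chromatic number `χ''(G)`. -/
noncomputable def totalChromatic (G : SimpleGraph V) : ℕ :=
  sInf {k | ∃ c : V ⊕ G.edgeSet → Fin k, IsTotalColoring G c}

/-- A graph is a star forest iff each of its connected components is a star (a tree of
diameter at most 2); equivalently, it contains no walk `a, b, c, d` with `a ≠ c` and
`b ≠ d` (this excludes both paths with three edges and triangles). -/
def IsStarForest {W : Type*} (H : SimpleGraph W) : Prop :=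
  ∀ a b c d : W, H.Adj a b → H.Adj b c → H.Adj c d → a = c ∨ b = d

/-- The star arboricity `st(G)`: the minimum number of star forests in `G` whose union
covers all edges of `G`. -/
noncomputable def starArboricity (G : SimpleGraph V) : ℕ :=
  sInf {n | ∃ F : Fin n → SimpleGraph V, (∀ i, F i ≤ G) ∧ (∀ i, IsStarForest (F i)) ∧
    ∀ e ∈ G.edgeSet, ∃ i, e ∈ (F i).edgeSet}


open Classical in
private noncomputable def zcenter {V : Type*} (H : SimpleGraph V) (e : Sym2 V) : V :=
  if h : ∃ x, x ∈ e ∧ ∃ f ∈ H.edgeSet, f ≠ e ∧ x ∈ f then h.choose else e.out.1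

open Classical in
private lemma zcenter_mem {V : Type*} (H : SimpleGraph V) (e : Sym2 V) : zcenter H e ∈ e := by
  unfold zcenter
  split
  · next h => exact h.choose_spec.1
  · exact Sym2.out_fst_mem e

open Classical in
private lemma zcenter_eq {V : Type*} (H : SimpleGraph V) (hSF : IsStarForest H)
    {e f : Sym2 V} {v : V}
    (he : e ∈ H.edgeSet) (hf : f ∈ H.edgeSet) (hne : f ≠ e) (hv : v ∈ e) (hvf : v ∈ f) :
    zcenter H e = v := by
  have hex : ∃ x, x ∈ e ∧ ∃ g ∈ H.edgeSet, g ≠ e ∧ x ∈ g := ⟨v, hv, f, hf, hne, hvf⟩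
  rw [zcenter, dif_pos hex]
  obtain ⟨hxe, g, hg, hge, hxg⟩ := hex.choose_spec
  set x := hex.choose with hxdef
  by_contra hxv
  have he' : e = s(x, v) := by
    have h1 := Sym2.other_spec' hxe
    have h2 : v = Sym2.Mem.other' hxe := by
      have := Sym2.mem_iff.mp (h1 ▸ hv)
      tauto
    rw [← h1, ← h2]
  set y := Sym2.Mem.other' hxg with hy
  have hg' : g = s(x, y) := (Sym2.other_spec' hxg).symm
  set w := Sym2.Mem.other' hvf with hw
  have hf' : f = s(v, w) := (Sym2.other_spec' hvf).symm
  have hyv : y ≠ v := fun h => hge (by rw [hg', h, ← he'])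
  have hxw : x ≠ w := fun h => hne (by rw [hf', ← h, Sym2.eq_swap, ← he'])
  have a1 : H.Adj y x := H.mem_edgeSet.1 (by rw [Sym2.eq_swap, ← hg']; exact hg)
  have a2 : H.Adj x v := H.mem_edgeSet.1 (he' ▸ he)
  have a3 : H.Adj v w := H.mem_edgeSet.1 (hf' ▸ hf)
  rcases hSF y x v w a1 a2 a3 with h | h
  · exact hyv h
  · exact hxw h

private lemma totalNonempty {V : Type*} [Fintype V] [DecidableEq V] (G : SimpleGraph V) :
    ∃ k, ∃ c : V ⊕ G.edgeSet → Fin k, IsTotalColoring G c := by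
  have : Finite (G.edgeSet) := Subtype.finite
  have : Finite (V ⊕ G.edgeSet) := by infer_instance
  refine ⟨Nat.card (V ⊕ G.edgeSet), (Finite.equivFin _), ?_, ?_, ?_⟩
  · intro u w h heq
    exact h.ne (Sum.inl_injective ((Finite.equivFin _).injective heq))
  · intro v e _ heq
    exact absurd ((Finite.equivFin _).injective heq) (by simp)
  · intro e f hne _ heq
    exact hne (Sum.inr_injective ((Finite.equivFin _).injective heq))

private lemma starNonempty {V : Type*} [Fintype V] [DecidableEq V] (G : SimpleGraph V) :
    ∃ n, ∃ F : Fin n → SimpleGraph V, (∀ i, F i ≤ G) ∧ (∀ i, IsStarForest (F i)) ∧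
      ∀ e ∈ G.edgeSet, ∃ i, e ∈ (F i).edgeSet := by
  have : Finite (G.edgeSet) := Subtype.finite
  let en : Fin (Nat.card G.edgeSet) ≃ G.edgeSet := (Finite.equivFin _).symm
  refine ⟨Nat.card G.edgeSet, fun i => fromEdgeSet {(en i : Sym2 V)}, ?_, ?_, ?_⟩
  · intro i
    have : ({(en i : Sym2 V)} : Set (Sym2 V)) ⊆ G.edgeSet := by
      simp [(en i).2]
    calc fromEdgeSet {(en i : Sym2 V)} ≤ fromEdgeSet G.edgeSet := fromEdgeSet_mono this
      _ = G := fromEdgeSet_edgeSet G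
  · intro i a b c d hab hbc _
    have h1 : s(a,b) = (en i : Sym2 V) := by
      have := (fromEdgeSet _).mem_edgeSet.2 hab
      rw [edgeSet_fromEdgeSet] at this
      simpa using this.1
    have h2 : s(b,c) = (en i : Sym2 V) := by
      have := (fromEdgeSet _).mem_edgeSet.2 hbc
      rw [edgeSet_fromEdgeSet] at this
      simpa using this.1
    have := h1.trans h2.symm
    rw [Sym2.eq_iff] at this
    rcases this with ⟨h, h'⟩ | ⟨h, h'⟩
    · exact absurd h hab.ne
    · exact Or.inl h
  · intro e he
    refine ⟨en.symm ⟨e, he⟩, ?_⟩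
    rw [edgeSet_fromEdgeSet]
    constructor
    · exact (congrArg Subtype.val (en.apply_symm_apply ⟨e, he⟩)).symm
    · exact G.not_isDiag_of_mem_edgeSet he

/-- For every finite simple graph `G`,
`χ_vi(G) ≤ χ''(G) + st(G)`. -/
theorem chiVI_le_totalChromatic_add_starArboricity {V : Type*} [Fintype V] [DecidableEq V]
    (G : SimpleGraph V) :
    chiVI G ≤ totalChromatic G + starArboricity G := by
  classical
  obtain ⟨k0, c0, hc0⟩ := totalNonempty G
  obtain ⟨n0, F0, h0⟩ := starNonempty G
  set k := totalChromatic G with hkdef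
  set n := starArboricity G with hndef
  have hT : ∃ c : V ⊕ G.edgeSet → Fin k, IsTotalColoring G c :=
    Nat.sInf_mem (s := {k | ∃ c : V ⊕ G.edgeSet → Fin k, IsTotalColoring G c}) ⟨k0, c0, hc0⟩
  have hS : ∃ F : Fin n → SimpleGraph V, (∀ i, F i ≤ G) ∧ (∀ i, IsStarForest (F i)) ∧
      ∀ e ∈ G.edgeSet, ∃ i, e ∈ (F i).edgeSet :=
    Nat.sInf_mem (s := {m | ∃ F : Fin m → SimpleGraph V, (∀ i, F i ≤ G) ∧
      (∀ i, IsStarForest (F i)) ∧ ∀ e ∈ G.edgeSet, ∃ i, e ∈ (F i).edgeSet}) ⟨n0, F0, h0⟩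
  obtain ⟨φ, hφ1, hφ2, hφ3⟩ := hT
  obtain ⟨F, hFle, hFsf, hFcov⟩ := hS
  set E : Inc G → G.edgeSet := fun i => ⟨i.1.2, i.2.1⟩ with hE
  set j : G.edgeSet → Fin n := fun e => (hFcov e e.2).choose with hjdef
  have hj : ∀ e : G.edgeSet, (e : Sym2 V) ∈ (F (j e)).edgeSet := fun e => (hFcov e e.2).choose_spec
  set c : VIElem G → Fin (k + n) := Sum.elim (fun v => Fin.castAdd n (φ (Sum.inl v)))
    (fun i => if i.1.1 = zcenter (F (j (E i))) i.1.2 then Fin.castAdd n (φ (Sum.inr (E i)))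
      else Fin.natAdd k (j (E i))) with hc
  have castne : ∀ (a : Fin k) (b : Fin n), Fin.castAdd n a ≠ Fin.natAdd k b := by
    intro a b h
    have := congrArg Fin.val h
    simp at this
    omega
  have natinj : ∀ (a b : Fin n), Fin.natAdd k a = Fin.natAdd k b → a = b := by
    intro a b h
    have := congrArg Fin.val h
    simp at this
    exact Fin.ext this
  have castinj := Fin.castAdd_injective k n
  -- key: if two distinct edges of F m share v, then v is the zcenter of both
  have key : ∀ (m : Fin n) (e f : Sym2 V) (v : V), e ∈ (F m).edgeSet → f ∈ (F m).edgeSet →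
      f ≠ e → v ∈ e → v ∈ f → zcenter (F m) e = v :=
    fun m e f v he hf hne hv hvf => zcenter_eq (F m) (hFsf m) he hf hne hv hvf
  have hmain : IsVIColoring G c := by
    rintro (u | i) (w | i') hadj
    · -- vertex / vertex
      have hadj' : G.Adj u w := hadj
      simp only [hc, Sum.elim_inl]
      exact fun h => hφ1 u w hadj' (castinj h)
    · -- vertex / incidence
      have hadj' : u ∈ i'.1.2 := hadj
      simp only [hc, Sum.elim_inl, Sum.elim_inr]
      split
      · exact fun h => hφ2 u (E i') hadj' (castinj h)
      · exact castne _ _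
    · -- incidence / vertex
      have hadj' : w ∈ i.1.2 := hadj
      simp only [hc, Sum.elim_inl, Sum.elim_inr]
      split
      · exact fun h => hφ2 w (E i) hadj' (castinj h.symm)
      · exact fun h => castne _ _ h.symm
    · -- incidence / incidence
      obtain ⟨hne, hcase⟩ := hadj
      simp only [hc, Sum.elim_inr]
      split
      · next h1 =>
        split
        · next h2 =>
          -- both centers: edge colors of total coloring
          intro h
          have hedge : φ (Sum.inr (E i)) = φ (Sum.inr (E i')) := castinj h
          have hEE : E i ≠ E i' := by
            intro hEeq
            have hs : i.1.2 = i'.1.2 := congrArg Subtype.val hEeq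
            apply hne
            apply Subtype.ext
            apply Prod.ext
            · rw [h1, h2, ← hEeq, ← hs]
            · exact hs
          refine hφ3 (E i) (E i') hEE ?_ hedge
          rcases hcase with hv | hs | hs | hs
          · refine ⟨i.1.1, i.2.2, ?_⟩
            show i.1.1 ∈ i'.1.2
            rw [hv]; exact i'.2.2
          · exact absurd (Subtype.ext hs) hEE
          · refine ⟨i'.1.1, ?_, i'.2.2⟩
            show i'.1.1 ∈ i.1.2
            rw [← hs]; exact Sym2.mem_mk_right _ _
          · refine ⟨i.1.1, i.2.2, ?_⟩
            show i.1.1 ∈ i'.1.2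
            rw [← hs]; exact Sym2.mem_mk_left _ _
        · exact castne _ _
      · next h1 =>
        split
        · next h2 => exact fun h => castne _ _ h.symm
        · next h2 =>
          -- both leaves: star forest indices
          intro h
          have hm : j (E i) = j (E i') := natinj _ _ h
          set m := j (E i) with hmdef
          have hei : (i.1.2 : Sym2 V) ∈ (F m).edgeSet := hj (E i)
          have hei' : (i'.1.2 : Sym2 V) ∈ (F m).edgeSet := hm ▸ hj (E i')
          rw [← hm] at h2
          by_cases hs : i.1.2 = i'.1.2
          · -- same edge, two distinct endpoints; zcenter is one of them
            have hvv : i.1.1 ≠ i'.1.1 := by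
              intro hv
              exact hne (Subtype.ext (Prod.ext hv hs))
            have hmem := zcenter_mem (F m) i.1.2
            have h12 : i.1.2 = s(i.1.1, i'.1.1) := by
              have ho := Sym2.other_spec' i.2.2
              have : i'.1.1 = Sym2.Mem.other' i.2.2 := by
                have := Sym2.mem_iff.mp (ho ▸ (hs ▸ i'.2.2))
                tauto
              rw [← ho, ← this]
            have hmem' : zcenter (F m) i.1.2 ∈ s(i.1.1, i'.1.1) :=
              h12 ▸ hmem
            rcases Sym2.mem_iff.mp hmem' with hh | hh
            · exact h1 hh.symm
            · apply h2
              show i'.1.1 = zcenter (F m) i'.1.2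
              rw [← hs]; exact hh.symm
          · -- distinct edges
            rcases hcase with hv | hs2 | hs2 | hs2
            · refine h1 (key m i.1.2 i'.1.2 i.1.1 hei hei' (fun hh => hs hh.symm) i.2.2 ?_).symm
              rw [hv]; exact i'.2.2
            · exact hs hs2
            · refine h2 (key m i'.1.2 i.1.2 i'.1.1 hei' hei hs i'.2.2 ?_).symm
              show i'.1.1 ∈ i.1.2
              rw [← hs2]; exact Sym2.mem_mk_right _ _
            · refine h1 (key m i.1.2 i'.1.2 i.1.1 hei hei' (fun hh => hs hh.symm) i.2.2 ?_).symm
              rw [← hs2]; exact Sym2.mem_mk_left _ _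
  exact Nat.sInf_le ⟨c, hmain⟩
end

section
/- Let G be a finite simple graph with at least one edge and let s be a positive integer. Then (i) χ_{vi,s}(G) ≤ max{χ_{i,s}(G), χ_l(G) + Δ(G) + s}; and (ii) if χ_{i,s}(G) ≥ χ_l(G) + Δ(G) + s, then χ_{vi,s}(G) = χ_{i,s}(G). -/
open SimpleGraph

variable {V : Type*}

/-- An incidence `k`-coloring of `G`: adjacent incidences receive distinct colors. -/
def IsIncColoring (G : SimpleGraph V) {k : ℕ} (c : Inc G → Fin k) : Prop :=
  ∀ i j : Inc G, VIAdj G (Sum.inr i) (Sum.inr j) → c i ≠ c j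

/-- An incidence `(k, s)`-coloring of `G`: an incidence `k`-coloring in which at most `s`
distinct colors appear on `I₂(v)` for every vertex `v`. -/
def IsIncSColoring (G : SimpleGraph V) (s : ℕ) {k : ℕ} (c : Inc G → Fin k) : Prop :=
  IsIncColoring G c ∧ ∀ v : V, (c '' I2 G v).ncard ≤ s

/-- `χ_{i,s}(G)`: the least `k` admitting an incidence `(k, s)`-coloring. -/
noncomputable def chiIS (G : SimpleGraph V) (s : ℕ) : ℕ :=
  sInf {k | ∃ c : Inc G → Fin k, IsIncSColoring G s c}

/-- `G` is `k`-choosable: for every assignment of lists of size `k` to the vertices there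
is a proper coloring choosing each color from the corresponding list. -/
def Choosable (G : SimpleGraph V) (k : ℕ) : Prop :=
  ∀ L : V → Finset ℕ, (∀ v, (L v).card = k) →
    ∃ c : V → ℕ, (∀ v, c v ∈ L v) ∧ ∀ u w, G.Adj u w → c u ≠ c w

/-- The list chromatic number (choosability) `χ_l(G)`. -/
noncomputable def listChromatic (G : SimpleGraph V) : ℕ :=
  sInf {k | Choosable G k}

section AuxForStatement7

/-- The other endpoint of an incidence. -/
noncomputable def IncOther {G : SimpleGraph V} (i : Inc G) : V :=
  Sym2.Mem.other i.2.2

lemma IncOther_spec {G : SimpleGraph V} (i : Inc G) : s(i.1.1, IncOther i) = i.1.2 :=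
  Sym2.other_spec i.2.2

lemma IncOther_ne {G : SimpleGraph V} (i : Inc G) : IncOther i ≠ i.1.1 := by
  intro h
  have hd := G.not_isDiag_of_mem_edgeSet i.2.1
  rw [← IncOther_spec i, h] at hd
  exact hd (Sym2.mk_isDiag_iff.mpr rfl)

lemma Inc.ext' {G : SimpleGraph V} {i j : Inc G} (h1 : i.1.1 = j.1.1)
    (h2 : i.1.2 = j.1.2) : i = j :=
  Subtype.ext (Prod.ext h1 h2)

lemma choosable_card [Fintype V] [DecidableEq V] (G : SimpleGraph V) :
    Choosable G (Fintype.card V) := by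
  classical
  intro L hL
  suffices h : ∀ A : Finset V, ∃ c : V → ℕ, (∀ v ∈ A, c v ∈ L v) ∧
      ∀ u ∈ A, ∀ w ∈ A, G.Adj u w → c u ≠ c w by
    obtain ⟨c, h1, h2⟩ := h Finset.univ
    exact ⟨c, fun v => h1 v (Finset.mem_univ v),
      fun u w hadj => h2 u (Finset.mem_univ u) w (Finset.mem_univ w) hadj⟩
  intro A
  induction A using Finset.induction_on with
  | empty => exact ⟨fun _ => 0, by simp, by simp⟩
  | insert a A ha ih =>
    obtain ⟨c, hc1, hc2⟩ := ih
    have hmem : ∀ y, y ∈ insert a A → y ≠ a → y ∈ A := fun y hy hya =>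
      (Finset.mem_insert.mp hy).resolve_left hya
    set F := (A.filter (fun u => G.Adj a u)).image c with hF
    have hcard : F.card < (L a).card := by
      have h1 : F.card ≤ (A.filter (fun u => G.Adj a u)).card := Finset.card_image_le
      have h2 : (A.filter (fun u => G.Adj a u)).card ≤ (Finset.univ.erase a).card := by
        apply Finset.card_le_card
        intro x hx
        have hxA : x ∈ A := Finset.mem_of_mem_filter x hx
        refine Finset.mem_erase.mpr ⟨fun h => ha ?_, Finset.mem_univ x⟩
        rw [← h]; exact hxA
      have h3 : (Finset.univ.erase a).card = Fintype.card V - 1 := by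
        rw [Finset.card_erase_of_mem (Finset.mem_univ a), Finset.card_univ]
      have h4 : 1 ≤ Fintype.card V := Fintype.card_pos_iff.mpr ⟨a⟩
      have h5 := hL a
      omega
    have hne : (L a \ F).Nonempty := by
      rw [Finset.sdiff_nonempty]
      intro hsub
      exact absurd (Finset.card_le_card hsub) (not_le.mpr hcard)
    obtain ⟨x, hx⟩ := hne
    have hxL : x ∈ L a := (Finset.mem_sdiff.mp hx).1
    have hxF : x ∉ F := (Finset.mem_sdiff.mp hx).2
    refine ⟨Function.update c a x, ?_, ?_⟩
    · intro v hv
      by_cases hva : v = a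
      · subst hva; simpa using hxL
      · rw [Function.update_of_ne hva]
        exact hc1 v (hmem v hv hva)
    · intro u hu w hw hadj
      by_cases hua : u = a <;> by_cases hwa : w = a
      · subst hua; subst hwa; exact absurd hadj (G.loopless.irrefl _)
      · subst hua
        have hwA : w ∈ A := hmem w hw hwa
        rw [Function.update_self, Function.update_of_ne hwa]
        intro h
        apply hxF
        rw [h]
        exact Finset.mem_image_of_mem c (Finset.mem_filter.mpr ⟨hwA, hadj⟩)
      · subst hwa
        have huA : u ∈ A := hmem u hu hua
        rw [Function.update_of_ne hua, Function.update_self]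
        intro h
        apply hxF
        rw [← h]
        exact Finset.mem_image_of_mem c (Finset.mem_filter.mpr ⟨huA, hadj.symm⟩)
      · rw [Function.update_of_ne hua, Function.update_of_ne hwa]
        exact hc2 u (hmem u hu hua) w (hmem w hw hwa) hadj

lemma exists_incSColoring [Fintype V] [DecidableEq V] (G : SimpleGraph V)
    (s : ℕ) (hs : 1 ≤ s) :
    ∃ c : Inc G → Fin (Fintype.card V), IsIncSColoring G s c := by
  classical
  let e := Fintype.equivFin V
  refine ⟨fun i => e (IncOther i), ?_, ?_⟩
  · rintro i j ⟨hne, hcase⟩ heq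
    have hx : IncOther i = IncOther j := e.injective heq
    have hi2 : i.1.2 = s(i.1.1, IncOther j) := by rw [← hx, IncOther_spec]
    have hj2 : j.1.2 = s(j.1.1, IncOther j) := (IncOther_spec j).symm
    apply hne
    rcases hcase with h | h | h | h
    · exact Inc.ext' h (by rw [hi2, hj2, h])
    · have hh : s(i.1.1, IncOther j) = s(j.1.1, IncOther j) := by rw [← hi2, h, hj2]
      rcases Sym2.eq_iff.mp hh with ⟨h1, _⟩ | ⟨h1, h2⟩
      · exact Inc.ext' h1 h
      · exact absurd h2 (IncOther_ne j)
    · have hh : s(i.1.1, j.1.1) = s(i.1.1, IncOther j) := h.trans hi2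
      rcases Sym2.eq_iff.mp hh with ⟨_, h1⟩ | ⟨h1, h2⟩
      · exact absurd h1.symm (IncOther_ne j)
      · exact absurd (hx ▸ h1).symm (IncOther_ne i)
    · have hh : s(i.1.1, j.1.1) = s(j.1.1, IncOther j) := h.trans hj2
      rcases Sym2.eq_iff.mp hh with ⟨_, h1⟩ | ⟨h1, h2⟩
      · exact absurd h1.symm (IncOther_ne j)
      · exact absurd (hx ▸ h1).symm (IncOther_ne i)
  · intro v
    have hsub : (fun i => e (IncOther i)) '' I2 G v ⊆ {e v} := by
      rintro _ ⟨i, hi, rfl⟩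
      have h1 : IncOther i = v := by
        have hh : s(i.1.1, IncOther i) = s(i.1.1, v) := (IncOther_spec i).trans hi.2
        rcases Sym2.eq_iff.mp hh with ⟨_, h⟩ | ⟨h1, h2⟩
        · exact h
        · exact absurd h1 hi.1
      simp [h1]
    calc ((fun i => e (IncOther i)) '' I2 G v).ncard
        ≤ ({e v} : Set (Fin (Fintype.card V))).ncard :=
          Set.ncard_le_ncard hsub (Set.finite_singleton _)
      _ = 1 := Set.ncard_singleton _
      _ ≤ s := hs

lemma pad_incS {G : SimpleGraph V} {s k k' : ℕ} (h : k ≤ k') {c : Inc G → Fin k}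
    (hc : IsIncSColoring G s c) : ∃ c' : Inc G → Fin k', IsIncSColoring G s c' := by
  refine ⟨fun i => Fin.castLE h (c i), ?_, ?_⟩
  · intro i j hadj heq
    exact hc.1 i j hadj (Fin.castLE_injective h heq)
  · intro v
    rw [show (fun i => Fin.castLE h (c i)) '' I2 G v
        = Fin.castLE h '' (c '' I2 G v) from (Set.image_image _ _ _).symm,
      Set.ncard_image_of_injective _ (Fin.castLE_injective h)]
    exact hc.2 v

lemma exists_vis_of_incS [Fintype V] [DecidableEq V] (G : SimpleGraph V) (s k : ℕ)
    (hk : listChromatic G + maxDeg G + s ≤ k)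
    (c₀ : Inc G → Fin k) (hc₀ : IsIncSColoring G s c₀) :
    ∃ c : VIElem G → Fin k, IsVISColoring G s c := by
  classical
  haveI : Fintype (Inc G) := Fintype.ofFinite _
  set ℓ := listChromatic G with hℓ
  set Forb : V → Finset ℕ := fun v =>
    (Finset.univ.filter (fun i : Inc G => v ∈ i.1.2)).image (fun i => (c₀ i : ℕ))
    with hForb
  have hForbCard : ∀ v, (Forb v).card ≤ maxDeg G + s := by
    intro v
    set A := Finset.univ.filter (fun i : Inc G => i.1.1 = v) with hA
    set B := Finset.univ.filter (fun i : Inc G => i.1.1 ≠ v ∧ v ∈ i.1.2) with hB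
    have hsub : Forb v ⊆ A.image (fun i => (c₀ i : ℕ)) ∪ B.image (fun i => (c₀ i : ℕ)) := by
      intro x hx
      obtain ⟨i, hi, rfl⟩ := Finset.mem_image.mp hx
      have hiv : v ∈ i.1.2 := (Finset.mem_filter.mp hi).2
      by_cases h : i.1.1 = v
      · exact Finset.mem_union_left _ (Finset.mem_image_of_mem _
          (Finset.mem_filter.mpr ⟨Finset.mem_univ _, h⟩))
      · exact Finset.mem_union_right _ (Finset.mem_image_of_mem _
          (Finset.mem_filter.mpr ⟨Finset.mem_univ _, h, hiv⟩))
    have hAcard : (A.image (fun i => (c₀ i : ℕ))).card ≤ maxDeg G := by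
      have h1 : (A.image (fun i => (c₀ i : ℕ))).card ≤ A.card := Finset.card_image_le
      have h2 : A.card ≤ (G.neighborSet v).ncard := by
        rw [Set.ncard_eq_toFinset_card']
        apply Finset.card_le_card_of_injOn (fun i => IncOther i)
        · intro i hi
          have hiv : i.1.1 = v := (Finset.mem_filter.mp hi).2
          rw [Finset.mem_coe, Set.mem_toFinset]
          have hadj : G.Adj i.1.1 (IncOther i) := by
            rw [← SimpleGraph.mem_edgeSet, IncOther_spec]; exact i.2.1
          rw [hiv] at hadj
          exact hadj
        · intro i hi j hj hij
          have hi1 : i.1.1 = v := (Finset.mem_filter.mp hi).2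
          have hj1 : j.1.1 = v := (Finset.mem_filter.mp hj).2
          have hij' : IncOther i = IncOther j := hij
          refine Inc.ext' (hi1.trans hj1.symm) ?_
          rw [← IncOther_spec i, ← IncOther_spec j, hi1, hj1, hij']
      have h3 : (G.neighborSet v).ncard ≤ maxDeg G :=
        Finset.le_sup (f := fun v => (G.neighborSet v).ncard) (Finset.mem_univ v)
      omega
    have hBcard : (B.image (fun i => (c₀ i : ℕ))).card ≤ s := by
      have hBI : (B : Set (Inc G)) = I2 G v := by
        ext i
        simp only [hB, Finset.coe_filter, Finset.mem_univ, true_and, Set.mem_setOf_eq,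
          I2]
        constructor
        · rintro ⟨h1, h2⟩
          exact ⟨h1, ((Sym2.mem_and_mem_iff h1).mp ⟨i.2.2, h2⟩)⟩
        · rintro ⟨h1, h2⟩
          exact ⟨h1, by rw [h2]; exact Sym2.mem_mk_right _ _⟩
      have hn : ((B.image (fun i => (c₀ i : ℕ))) : Set ℕ).ncard ≤ s := by
        rw [Finset.coe_image, hBI,
          show (fun i => (c₀ i : ℕ)) '' I2 G v
            = (fun x : Fin k => (x : ℕ)) '' (c₀ '' I2 G v) from (Set.image_image _ _ _).symm,
          Set.ncard_image_of_injective _ Fin.val_injective]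
        exact hc₀.2 v
      rwa [Set.ncard_coe_finset] at hn
    have := Finset.card_le_card hsub
    have := Finset.card_union_le (A.image (fun i => (c₀ i : ℕ)))
      (B.image (fun i => (c₀ i : ℕ)))
    omega
  have hAvail : ∀ v, ℓ ≤ ((Finset.range k) \ Forb v).card := by
    intro v
    have h1 := Finset.card_le_card_sdiff_add_card (s := Finset.range k) (t := Forb v)
    have h2 := hForbCard v
    rw [Finset.card_range] at h1
    omega
  choose L hL1 hL2 using fun v => Finset.exists_subset_card_eq (hAvail v)
  have hCh : Choosable G ℓ :=
    Nat.sInf_mem (⟨Fintype.card V, choosable_card G⟩ :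
      ({k | Choosable G k} : Set ℕ).Nonempty)
  obtain ⟨φ, hφ1, hφ2⟩ := hCh L hL2
  have hφmem : ∀ v, φ v ∈ (Finset.range k) \ Forb v := fun v => hL1 v (hφ1 v)
  have hφlt : ∀ v, φ v < k := fun v =>
    Finset.mem_range.mp (Finset.mem_sdiff.mp (hφmem v)).1
  have hφForb : ∀ v, φ v ∉ Forb v := fun v => (Finset.mem_sdiff.mp (hφmem v)).2
  refine ⟨Sum.elim (fun v => (⟨φ v, hφlt v⟩ : Fin k)) c₀, ?_, ?_⟩
  · rintro (u | i) (w | j) hadj heq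
    · exact hφ2 u w hadj (congrArg Fin.val heq)
    · apply hφForb u
      have hmem : (c₀ j : ℕ) ∈ Forb u := Finset.mem_image_of_mem _
        (Finset.mem_filter.mpr ⟨Finset.mem_univ _, hadj⟩)
      rwa [show ((c₀ j : ℕ)) = φ u from (congrArg Fin.val heq).symm] at hmem
    · apply hφForb w
      have hmem : (c₀ i : ℕ) ∈ Forb w := Finset.mem_image_of_mem _
        (Finset.mem_filter.mpr ⟨Finset.mem_univ _, hadj⟩)
      rwa [show ((c₀ i : ℕ)) = φ w from congrArg Fin.val heq] at hmem
    · exact hc₀.1 i j hadj heq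
  · intro v
    exact hc₀.2 v

end AuxForStatement7

/-- Let `G` be a finite simple graph with at least one edge and let `s`
be a positive integer. Then (i) `χ_{vi,s}(G) ≤ max {χ_{i,s}(G), χ_l(G) + Δ(G) + s}`, and
(ii) if `χ_{i,s}(G) ≥ χ_l(G) + Δ(G) + s` then `χ_{vi,s}(G) = χ_{i,s}(G)`. -/
theorem chiVIS_le_max_chiIS_listChromatic {V : Type*} [Fintype V] [DecidableEq V]
    (G : SimpleGraph V) (hG : G.edgeSet.Nonempty) (s : ℕ) (hs : 1 ≤ s) :
    chiVIS G s ≤ max (chiIS G s) (listChromatic G + maxDeg G + s) ∧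
    (chiIS G s ≥ listChromatic G + maxDeg G + s → chiVIS G s = chiIS G s) := by
    classical
  have hISne : {k | ∃ c : Inc G → Fin k, IsIncSColoring G s c}.Nonempty :=
    ⟨Fintype.card V, exists_incSColoring G s hs⟩
  obtain ⟨c₁, hc₁⟩ : ∃ c : Inc G → Fin (chiIS G s), IsIncSColoring G s c :=
    Nat.sInf_mem hISne
  set k0 := max (chiIS G s) (listChromatic G + maxDeg G + s) with hk0
  have hk0IS : chiIS G s ≤ k0 := le_max_left _ _
  obtain ⟨c₂, hc₂⟩ := pad_incS hk0IS hc₁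
  have hk0ge : listChromatic G + maxDeg G + s ≤ k0 := le_max_right _ _
  obtain ⟨c₃, hc₃⟩ := exists_vis_of_incS G s k0 hk0ge c₂ hc₂
  have hVISk0 : k0 ∈ {k | ∃ c : VIElem G → Fin k, IsVISColoring G s c} := ⟨c₃, hc₃⟩
  have h1 : chiVIS G s ≤ k0 := Nat.sInf_le hVISk0
  refine ⟨h1, ?_⟩
  intro hge
  have hk0eq : k0 = chiIS G s := max_eq_left hge
  have hVISne : {k | ∃ c : VIElem G → Fin k, IsVISColoring G s c}.Nonempty :=
    ⟨k0, hVISk0⟩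
  obtain ⟨c₄, hc₄⟩ : ∃ c : VIElem G → Fin (chiVIS G s), IsVISColoring G s c :=
    Nat.sInf_mem hVISne
  have h2 : chiIS G s ≤ chiVIS G s := by
    apply Nat.sInf_le
    refine ⟨fun i => c₄ (Sum.inr i), ?_, ?_⟩
    · intro i j hadj
      exact hc₄.1 (Sum.inr i) (Sum.inr j) hadj
    · exact hc₄.2
  omega
end

section
/- Let k be a positive integer and let G be a k-degenerate finite simple graph with maximum degree Δ(G) ≥ 2. Then χ_{vi,k}(G) ≤ Δ(G) + 2k. -/
open SimpleGraph

variable {V : Type*}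

/-- A graph is `k`-degenerate if every (nonempty, induced) subgraph has a vertex of degree
at most `k`; the degree of `v` in the subgraph induced on `s ∋ v` is `|N_G(v) ∩ s|`. -/
def Degenerate (k : ℕ) (G : SimpleGraph V) : Prop :=
  ∀ s : Set V, s.Nonempty → ∃ v ∈ s, (G.neighborSet v ∩ s).ncard ≤ k

/-- the incidence `(a, {a,b})` for an adjacent pair. -/
def mkInc {G : SimpleGraph V} {a b : V} (h : G.Adj a b) : Inc G :=
  ⟨(a, s(a,b)), G.mem_edgeSet.2 h, Sym2.mem_mk_left a b⟩

open Classical in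
/-- total function giving the incidence `(a,{a,b})` if `a ~ b`, junk otherwise. -/
noncomputable def J (G : SimpleGraph V) (a b : V) : VIElem G :=
  if h : G.Adj a b then Sum.inr (mkInc h) else Sum.inl a

lemma J_eq {G : SimpleGraph V} {a b : V} (h : G.Adj a b) : J G a b = Sum.inr (mkInc h) := by
  rw [J, dif_pos h]

/-- membership of elements in the part of the graph induced by `s`. -/
def InS {G : SimpleGraph V} (s : Finset V) [DecidableEq V] : VIElem G → Prop
  | Sum.inl v => v ∈ s
  | Sum.inr i => ∀ x ∈ i.1.2, x ∈ s

lemma VIAdj_symm {G : SimpleGraph V} {a b : VIElem G} (h : VIAdj G a b) : VIAdj G b a := by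
  cases a with
  | inl u => cases b with
    | inl w => exact h.symm
    | inr j => exact h
  | inr i => cases b with
    | inl w => exact h
    | inr j =>
      obtain ⟨hne, hc⟩ := h
      refine ⟨Ne.symm hne, ?_⟩
      rcases hc with h1 | h2 | h3 | h4
      · exact Or.inl h1.symm
      · exact Or.inr (Or.inl h2.symm)
      · exact Or.inr (Or.inr (Or.inr (by rw [Sym2.eq_swap]; exact h3)))
      · exact Or.inr (Or.inr (Or.inl (by rw [Sym2.eq_swap]; exact h4)))

lemma inc_repr [DecidableEq V] {G : SimpleGraph V} (i : Inc G) :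
    ∃ b : V, G.Adj i.1.1 b ∧ i.1.2 = s(i.1.1, b) := by
  refine ⟨Sym2.Mem.other' i.2.2, ?_, (Sym2.other_spec' i.2.2).symm⟩
  have : s(i.1.1, Sym2.Mem.other' i.2.2) ∈ G.edgeSet := by
    rw [Sym2.other_spec' i.2.2]; exact i.2.1
  exact G.mem_edgeSet.1 this

lemma inc_eq_mkInc {G : SimpleGraph V} (i : Inc G) {b : V} (h : G.Adj i.1.1 b)
    (he : i.1.2 = s(i.1.1, b)) : i = mkInc h := by
  apply Subtype.ext
  apply Prod.ext
  · rfl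
  · exact he

lemma pick_color {N : ℕ} (F : Finset (Fin N)) (h : F.card < N) : ∃ x : Fin N, x ∉ F := by
  by_contra hc
  push_neg at hc
  have h2 := Finset.card_le_card (fun x _ => hc x : (Finset.univ : Finset (Fin N)) ⊆ F)
  simp [Fintype.card_fin] at h2
  omega

section Steps
variable [DecidableEq V] {N k Δ : ℕ}

lemma stepA (hN : Δ + 2*k ≤ N) (hNpos : 0 < N)
    (cV : V → Fin N) (C1 C2 : V → Finset (Fin N)) (W : Finset V)
    (hWk : W.card ≤ k)
    (hC1 : ∀ w ∈ W, (C1 w).card + 1 ≤ Δ)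
    (hC2k : ∀ w ∈ W, (C2 w).card ≤ k)
    (hdisj : ∀ w ∈ W, Disjoint (C2 w) (insert (cV w) (C1 w))) :
    ∃ fA : V → Fin N,
      (∀ w ∈ W, fA w ∉ insert (cV w) (C1 w)) ∧
      Set.InjOn fA ↑W ∧
      (∀ w ∈ W, (insert (fA w) (C2 w)).card ≤ k) ∧
      (∀ w ∈ W, fA w ∈ C2 w ∨ C2 w ⊆ (W.erase w).image fA) := by
  induction W using Finset.induction_on with
  | empty =>
      exact ⟨fun _ => ⟨0, hNpos⟩, by simp, by simp, by simp, by simp⟩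
  | @insert a T haT ih =>
      obtain ⟨fA', h1, h2, h3, h4⟩ := ih
        (le_trans (Finset.card_le_card (Finset.subset_insert a T)) hWk)
        (fun w hw => hC1 w (Finset.mem_insert_of_mem hw))
        (fun w hw => hC2k w (Finset.mem_insert_of_mem hw))
        (fun w hw => hdisj w (Finset.mem_insert_of_mem hw))
      have hne : ∀ w ∈ T, w ≠ a := fun w hw => ne_of_mem_of_not_mem hw haT
      have hTk : T.card + 1 ≤ k := by
        have := hWk; rwa [Finset.card_insert_of_notMem haT] at this
      set Fw : Finset (Fin N) := insert (cV a) (C1 a ∪ T.image fA') with hFw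
      have hFwcard : Fw.card + k < N := by
        have l1 : Fw.card ≤ 1 + ((C1 a).card + (T.image fA').card) :=
          le_trans (Finset.card_insert_le _ _) (by
            have := Finset.card_union_le (C1 a) (T.image fA'); omega)
        have l2 : (T.image fA').card ≤ T.card := Finset.card_image_le
        have l3 := hC1 a (Finset.mem_insert_self a T)
        omega
      have haA : a ∈ insert a T := Finset.mem_insert_self a T
      have hchoice : ∃ x : Fin N, x ∉ Fw ∧
          (insert x (C2 a)).card ≤ k ∧ (x ∈ C2 a ∨ C2 a ⊆ T.image fA') := by
        by_cases hc : (C2 a \ Fw).Nonempty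
        · obtain ⟨x, hx⟩ := hc
          rw [Finset.mem_sdiff] at hx
          refine ⟨x, hx.2, ?_, Or.inl hx.1⟩
          rw [Finset.insert_eq_self.2 hx.1]; exact hC2k a haA
        · have hsub : C2 a ⊆ Fw := by
            rw [← Finset.sdiff_eq_empty_iff_subset]
            exact Finset.not_nonempty_iff_eq_empty.1 hc
          have hsub2 : C2 a ⊆ T.image fA' := by
            intro γ hγ
            have h5 := hsub hγ
            have h6 : γ ∉ insert (cV a) (C1 a) :=
              Finset.disjoint_left.1 (hdisj a haA) hγ
            rw [hFw, Finset.mem_insert, Finset.mem_union] at h5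
            rw [Finset.mem_insert] at h6
            push_neg at h6
            tauto
          obtain ⟨x, hx⟩ := pick_color (Fw ∪ C2 a) (by
            have l4 := Finset.card_union_le Fw (C2 a)
            have l5 := hC2k a haA
            omega)
          rw [Finset.mem_union] at hx
          push_neg at hx
          refine ⟨x, hx.1, ?_, Or.inr hsub2⟩
          have l6 : (C2 a).card ≤ T.card :=
            le_trans (Finset.card_le_card hsub2) Finset.card_image_le
          have l7 := Finset.card_insert_le x (C2 a)
          omega
      obtain ⟨x, hxFw, hxk, hxor⟩ := hchoice
      have hupd : ∀ w ∈ T, Function.update fA' a x w = fA' w := fun w hw =>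
        Function.update_of_ne (hne w hw) _ _
      have himgT : ∀ (S : Finset V), S ⊆ T → S.image (Function.update fA' a x) = S.image fA' :=
        fun S hS => Finset.image_congr (fun y hy => hupd y (hS hy))
      have hxnotimg : x ∉ T.image fA' := fun hmem =>
        hxFw (Finset.mem_insert_of_mem (Finset.mem_union_right _ hmem))
      refine ⟨Function.update fA' a x, ?_, ?_, ?_, ?_⟩
      · intro w hw
        rcases Finset.mem_insert.1 hw with rfl | hw
        · rw [Function.update_self]
          intro hmem
          refine hxFw ?_
          rcases Finset.mem_insert.1 hmem with rfl | hm
          · exact Finset.mem_insert_self _ _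
          · exact Finset.mem_insert_of_mem (Finset.mem_union_left _ hm)
        · rw [Function.update_of_ne (hne w hw)]
          exact h1 w hw
      · intro w1 hw1 w2 hw2 heq
        simp only [Finset.coe_insert, Set.mem_insert_iff, Finset.mem_coe] at hw1 hw2
        rcases hw1 with rfl | hw1
        · rcases hw2 with rfl | hw2
          · rfl
          · exfalso
            rw [Function.update_self, hupd w2 hw2] at heq
            exact hxnotimg (heq ▸ Finset.mem_image_of_mem fA' hw2)
        · rcases hw2 with rfl | hw2
          · exfalso
            rw [Function.update_self, hupd w1 hw1] at heq
            exact hxnotimg (heq ▸ Finset.mem_image_of_mem fA' hw1)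
          · rw [hupd w1 hw1, hupd w2 hw2] at heq
            exact h2 hw1 hw2 heq
      · intro w hw
        rcases Finset.mem_insert.1 hw with rfl | hw
        · rw [Function.update_self]; exact hxk
        · rw [Function.update_of_ne (hne w hw)]
          exact h3 w hw
      · intro w hw
        rcases Finset.mem_insert.1 hw with rfl | hw
        · rw [Function.update_self]
          rcases hxor with h | h
          · exact Or.inl h
          · refine Or.inr ?_
            rw [Finset.erase_insert haT, himgT T (le_refl _)]
            exact h
        · rw [Function.update_of_ne (hne w hw)]
          rcases h4 w hw with h | h
          · exact Or.inl h
          · refine Or.inr (h.trans ?_)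
            rw [← himgT (T.erase w) (Finset.erase_subset w T)]
            exact Finset.image_subset_image (Finset.erase_subset_erase w (Finset.subset_insert a T))

lemma stepB (CwS : Finset (Fin N)) (FB : V → Finset (Fin N)) (W : Finset V)
    (hNpos : 0 < N)
    (hFB : ∀ w ∈ W, (FB w).card < N) :
    ∃ fB : V → Fin N,
      (∀ w ∈ W, fB w ∉ FB w) ∧
      (W = ∅ ∨ (∃ w ∈ W, fB w ∈ CwS ∪ (W.erase w).image fB) ∨
        (∃ w ∈ W, CwS ∪ (W.erase w).image fB ⊆ FB w)) := by
  induction W using Finset.induction_on with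
  | empty => exact ⟨fun _ => ⟨0, hNpos⟩, by simp, Or.inl rfl⟩
  | @insert a T haT ih =>
      obtain ⟨fB', h1, h2⟩ := ih (fun w hw => hFB w (Finset.mem_insert_of_mem hw))
      have hne : ∀ w ∈ T, w ≠ a := fun w hw => ne_of_mem_of_not_mem hw haT
      have haA : a ∈ insert a T := Finset.mem_insert_self a T
      have hchoice : ∃ x : Fin N, x ∉ FB a ∧
          (x ∈ CwS ∪ T.image fB' ∨ CwS ∪ T.image fB' ⊆ FB a) := by
        by_cases hc : ((CwS ∪ T.image fB') \ FB a).Nonempty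
        · obtain ⟨x, hx⟩ := hc
          rw [Finset.mem_sdiff] at hx
          exact ⟨x, hx.2, Or.inl hx.1⟩
        · obtain ⟨x, hx⟩ := pick_color (FB a) (hFB a haA)
          refine ⟨x, hx, Or.inr ?_⟩
          rw [← Finset.sdiff_eq_empty_iff_subset]
          exact Finset.not_nonempty_iff_eq_empty.1 hc
      obtain ⟨x, hxF, hxor⟩ := hchoice
      have hupd : ∀ w ∈ T, Function.update fB' a x w = fB' w := fun w hw =>
        Function.update_of_ne (hne w hw) _ _
      have himgT : ∀ (S : Finset V), S ⊆ T → S.image (Function.update fB' a x) = S.image fB' :=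
        fun S hS => Finset.image_congr (fun y hy => hupd y (hS hy))
      refine ⟨Function.update fB' a x, ?_, ?_⟩
      · intro w hw
        rcases Finset.mem_insert.1 hw with rfl | hw
        · rw [Function.update_self]; exact hxF
        · rw [Function.update_of_ne (hne w hw)]; exact h1 w hw
      · refine Or.inr ?_
        have hfromA : (∃ w ∈ insert a T, Function.update fB' a x w ∈
              CwS ∪ ((insert a T).erase w).image (Function.update fB' a x)) ∨
            (∃ w ∈ insert a T,
              CwS ∪ ((insert a T).erase w).image (Function.update fB' a x) ⊆ FB w) := by
          rcases hxor with hx | hx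
          · refine Or.inl ⟨a, haA, ?_⟩
            rw [Finset.erase_insert haT, himgT T (le_refl _), Function.update_self]
            exact hx
          · refine Or.inr ⟨a, haA, ?_⟩
            rw [Finset.erase_insert haT, himgT T (le_refl _)]
            exact hx
        rcases h2 with h2 | hO | h2
        · exact hfromA
        · obtain ⟨w, hw, hmem⟩ := hO
          refine Or.inl ⟨w, Finset.mem_insert_of_mem hw, ?_⟩
          rw [Function.update_of_ne (hne w hw)]
          rcases Finset.mem_union.1 hmem with hm | hm
          · exact Finset.mem_union_left _ hm
          · refine Finset.mem_union_right _ ?_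
            have heqi : (T.erase w).image fB' = (T.erase w).image (Function.update fB' a x) :=
              (himgT (T.erase w) (Finset.erase_subset w T)).symm
            exact Finset.image_subset_image
              (Finset.erase_subset_erase w (Finset.subset_insert a T)) (heqi ▸ hm)
        · exact hfromA

end Steps

section Key
variable [Fintype V] [DecidableEq V]

lemma key (G : SimpleGraph V) [DecidableRel G.Adj] (k Δ : ℕ) (hk : 1 ≤ k) (hΔ2 : 2 ≤ Δ)
    (hdeg : Degenerate k G)
    (hdegΔ : ∀ v : V, (G.neighborFinset v).card ≤ Δ) :
    ∀ s : Finset V, ∃ c : VIElem G → Fin (Δ + 2*k),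
      (∀ a b, InS s a → InS s b → VIAdj G a b → c a ≠ c b) ∧
      (∀ v ∈ s, ((G.neighborFinset v ∩ s.erase v).image (fun x => c (J G x v))).card ≤ k) := by
  intro s
  induction s using Finset.strongInduction with
  | _ s ih =>
  set N := Δ + 2*k with hN
  have hNpos : 0 < N := by omega
  rcases Finset.eq_empty_or_nonempty s with rfl | hs
  · refine ⟨fun _ => ⟨0, hNpos⟩, ?_, ?_⟩
    · intro a b ha hb _
      exfalso
      cases a with
      | inl v => exact absurd ha (by simp [InS])
      | inr i => exact absurd (ha i.1.1 i.2.2) (by simp)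
    · intro v hv; simp at hv
  · -- main case
    obtain ⟨u, hus0, huk0⟩ := hdeg ↑s (Finset.coe_nonempty.2 hs)
    have hus : u ∈ s := hus0
    have hset : G.neighborSet u ∩ ↑s = ↑(G.neighborFinset u ∩ s) := by
      rw [Finset.coe_inter, neighborFinset_def, Set.coe_toFinset]
    have huk : (G.neighborFinset u ∩ s).card ≤ k := by
      rw [← Set.ncard_coe_finset, ← hset]; exact huk0
    set s' := s.erase u with hs'def
    set W := G.neighborFinset u ∩ s' with hWdef
    have hWeq : W = G.neighborFinset u ∩ s := by
      ext x
      simp only [hWdef, hs'def, Finset.mem_inter, Finset.mem_erase, mem_neighborFinset]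
      constructor
      · rintro ⟨h1, _, h3⟩; exact ⟨h1, h3⟩
      · rintro ⟨h1, h2⟩; exact ⟨h1, h1.ne', h2⟩
    have hWk : W.card ≤ k := hWeq ▸ huk
    have hWadj : ∀ w ∈ W, G.Adj u w := fun w hw =>
      (mem_neighborFinset _ _ _).1 (Finset.mem_inter.1 hw).1
    have hWs' : ∀ w ∈ W, w ∈ s' := fun w hw => (Finset.mem_inter.1 hw).2
    have hus' : u ∉ s' := Finset.notMem_erase u s
    have hss' : s' ⊆ s := Finset.erase_subset u s
    have hs'ne : ∀ x ∈ s', x ≠ u := fun x hx => (Finset.mem_erase.1 hx).1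
    have hWΔ : W.card ≤ Δ :=
      le_trans (Finset.card_le_card Finset.inter_subset_left) (hdegΔ u)
    obtain ⟨c', hprop', hinv'⟩ := ih s' (Finset.erase_ssubset hus)
    -- colour data from the old colouring
    set cV : V → Fin N := fun w => c' (Sum.inl w) with hcVdef
    set C1 : V → Finset (Fin N) :=
      fun w => (G.neighborFinset w ∩ s').image (fun x => c' (J G w x)) with hC1def
    set C2 : V → Finset (Fin N) :=
      fun w => (G.neighborFinset w ∩ s').image (fun x => c' (J G x w)) with hC2def
    set CwS : Finset (Fin N) := W.image cV with hCwSdef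
    have hIns'v : ∀ {a : V}, a ∈ s' → InS (G := G) s' (Sum.inl a) := fun {a} h => h
    have hIns'mk : ∀ {a b : V} (h : G.Adj a b), a ∈ s' → b ∈ s' →
        InS (G := G) s' (Sum.inr (mkInc h)) := by
      intro a b h ha hb x hx
      rcases Sym2.mem_iff.1 hx with rfl | rfl
      · exact ha
      · exact hb
    -- degree bound inside s'
    have hδ : ∀ w ∈ W, (G.neighborFinset w ∩ s').card + 1 ≤ Δ := by
      intro w hw
      have hu_nb : u ∈ G.neighborFinset w := (mem_neighborFinset _ _ _).2 (hWadj w hw).symm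
      have hu_not : u ∉ G.neighborFinset w ∩ s' := fun hmem => hus' (Finset.mem_inter.1 hmem).2
      have hsub : insert u (G.neighborFinset w ∩ s') ⊆ G.neighborFinset w := by
        intro x hx
        rcases Finset.mem_insert.1 hx with rfl | hx
        · exact hu_nb
        · exact (Finset.mem_inter.1 hx).1
      have h1 := Finset.card_le_card hsub
      rw [Finset.card_insert_of_notMem hu_not] at h1
      have h2 := hdegΔ w
      omega
    have hC1card : ∀ w ∈ W, (C1 w).card + 1 ≤ Δ := by
      intro w hw
      have h1 : (C1 w).card ≤ (G.neighborFinset w ∩ s').card := Finset.card_image_le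
      have h2 := hδ w hw
      omega
    have hC2card : ∀ w ∈ W, (C2 w).card + 1 ≤ Δ := by
      intro w hw
      have h1 : (C2 w).card ≤ (G.neighborFinset w ∩ s').card := Finset.card_image_le
      have h2 := hδ w hw
      omega
    have hC2k : ∀ w ∈ W, (C2 w).card ≤ k := by
      intro w hw
      have h1 := hinv' w (hWs' w hw)
      have h2 : G.neighborFinset w ∩ s'.erase w = G.neighborFinset w ∩ s' := by
        ext x
        simp only [Finset.mem_inter, Finset.mem_erase, mem_neighborFinset]
        constructor
        · rintro ⟨ha, _, hb⟩; exact ⟨ha, hb⟩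
        · rintro ⟨ha, hb⟩; exact ⟨ha, ha.ne', hb⟩
      rw [h2] at h1
      exact h1
    -- the elements of C2 w are pairwise adjacent to the vertex w and to first incidences
    have hdisj : ∀ w ∈ W, Disjoint (C2 w) (insert (cV w) (C1 w)) := by
      intro w hw
      rw [Finset.disjoint_left]
      intro γ hγ hγ'
      obtain ⟨x, hx, rfl⟩ := Finset.mem_image.1 hγ
      have hxmem := Finset.mem_inter.1 hx
      have hadjwx : G.Adj w x := (mem_neighborFinset _ _ _).1 hxmem.1
      have hxs' : x ∈ s' := hxmem.2
      have hws' : w ∈ s' := hWs' w hw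
      rw [J_eq hadjwx.symm] at hγ'
      rcases Finset.mem_insert.1 hγ' with heq | hmem
      · exact hprop' (Sum.inr (mkInc hadjwx.symm)) (Sum.inl w)
          (hIns'mk hadjwx.symm hxs' hws') (hIns'v hws')
          (Sym2.mem_mk_right x w) heq
      · obtain ⟨y, hy, hyeq⟩ := Finset.mem_image.1 hmem
        have hymem := Finset.mem_inter.1 hy
        have hadjwy : G.Adj w y := (mem_neighborFinset _ _ _).1 hymem.1
        rw [J_eq hadjwy] at hyeq
        refine hprop' (Sum.inr (mkInc hadjwx.symm)) (Sum.inr (mkInc hadjwy))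
          (hIns'mk hadjwx.symm hxs' hws') (hIns'mk hadjwy hws' hymem.2) ?_ hyeq.symm
        refine ⟨?_, Or.inr (Or.inr (Or.inl rfl))⟩
        intro hcon
        have : x = w := congrArg (fun i => i.1.1) hcon
        exact hadjwx.ne' this
    -- Step A
    obtain ⟨fA, hA1, hA2, hA3, hA4⟩ :=
      stepA (le_refl N) hNpos cV C1 C2 W hWk hC1card hC2k hdisj
    -- Step B forbidden sets
    set FB : V → Finset (Fin N) :=
      fun w => insert (cV w) (C1 w ∪ insert (fA w) (C2 w) ∪ W.image fA) with hFBdef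
    have hFBcard : ∀ w ∈ W, (FB w).card < N := by
      intro w hw
      have himg : W.image fA ⊆ insert (fA w) ((W.erase w).image fA) := by
        intro γ hγ
        obtain ⟨y, hy, rfl⟩ := Finset.mem_image.1 hγ
        by_cases hyw : y = w
        · subst hyw; exact Finset.mem_insert_self _ _
        · exact Finset.mem_insert_of_mem
            (Finset.mem_image_of_mem _ (Finset.mem_erase.2 ⟨hyw, hy⟩))
      have hsub : FB w ⊆
          insert (cV w) (C1 w ∪ insert (fA w) (C2 w) ∪ (W.erase w).image fA) := by
        intro γ hγ
        rcases Finset.mem_insert.1 hγ with rfl | hγ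
        · exact Finset.mem_insert_self _ _
        refine Finset.mem_insert_of_mem ?_
        rcases Finset.mem_union.1 hγ with hγ | hγ
        · exact Finset.mem_union_left _ hγ
        · rcases Finset.mem_insert.1 (himg hγ) with rfl | hγ2
          · exact Finset.mem_union_left _
              (Finset.mem_union_right _ (Finset.mem_insert_self _ _))
          · exact Finset.mem_union_right _ hγ2
      have h0 := Finset.card_le_card hsub
      have h1 := Finset.card_insert_le (cV w)
        (C1 w ∪ insert (fA w) (C2 w) ∪ (W.erase w).image fA)
      have h2 := Finset.card_union_le (C1 w ∪ insert (fA w) (C2 w)) ((W.erase w).image fA)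
      have h3 := Finset.card_union_le (C1 w) (insert (fA w) (C2 w))
      have h4 : ((W.erase w).image fA).card ≤ W.card - 1 := by
        have := Finset.card_image_le (s := W.erase w) (f := fA)
        rw [Finset.card_erase_of_mem hw] at this
        exact this
      have h5 := hA3 w hw
      have h6 := hC1card w hw
      have h7 : 0 < W.card := Finset.card_pos.2 ⟨w, hw⟩
      omega
    -- Step B
    obtain ⟨fB, hB1, hB2⟩ := stepB CwS FB W hNpos hFBcard
    -- Step C : find a colour for u
    set FC : Finset (Fin N) := CwS ∪ W.image fA ∪ W.image fB with hFCdef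
    have hFC : ∃ x : Fin N, x ∉ FC := by
      by_contra hcon
      push_neg at hcon
      have hNle : N ≤ FC.card := by
        have := Finset.card_le_card (fun x _ => hcon x : (Finset.univ : Finset (Fin N)) ⊆ FC)
        simpa [Fintype.card_fin] using this
      have e1 := Finset.card_union_add_card_inter CwS (W.image fA)
      have e2 := Finset.card_union_add_card_inter (CwS ∪ W.image fA) (W.image fB)
      have bX : CwS.card ≤ W.card := Finset.card_image_le
      have bY : (W.image fA).card ≤ W.card := Finset.card_image_le
      have bZ : (W.image fB).card ≤ W.card := Finset.card_image_le
      have hFCc : FC.card = (CwS ∪ W.image fA ∪ W.image fB).card := rfl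
      have hXY0 : (CwS ∩ W.image fA).card = 0 := by omega
      have hXYZ0 : ((CwS ∪ W.image fA) ∩ W.image fB).card = 0 := by omega
      have hXc : CwS.card = W.card := by omega
      have hYc : (W.image fA).card = W.card := by omega
      have hZc : (W.image fB).card = W.card := by omega
      have hdk : W.card = k := by omega
      have hdΔ : W.card = Δ := by omega
      have hdisjXY : ∀ γ, γ ∈ CwS → γ ∈ W.image fA → False := by
        intro γ h1 h2
        have : γ ∈ CwS ∩ W.image fA := Finset.mem_inter.2 ⟨h1, h2⟩
        rw [Finset.card_eq_zero.1 hXY0] at this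
        exact absurd this (Finset.notMem_empty γ)
      have hdisjXYZ : ∀ γ, γ ∈ CwS ∪ W.image fA → γ ∈ W.image fB → False := by
        intro γ h1 h2
        have : γ ∈ (CwS ∪ W.image fA) ∩ W.image fB := Finset.mem_inter.2 ⟨h1, h2⟩
        rw [Finset.card_eq_zero.1 hXYZ0] at this
        exact absurd this (Finset.notMem_empty γ)
      have hWne : W ≠ ∅ := by
        intro h
        rw [h, Finset.card_empty] at hdΔ
        omega
      rcases hB2 with h | hO | hL
      · exact hWne h
      · obtain ⟨w, hw, hmem⟩ := hO
        rcases Finset.mem_union.1 hmem with hm | hm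
        · exact hdisjXYZ _ (Finset.mem_union_left _ hm) (Finset.mem_image_of_mem fB hw)
        · have hZsub : W.image fB ⊆ (W.erase w).image fB := by
            intro γ hγ
            obtain ⟨y, hy, rfl⟩ := Finset.mem_image.1 hγ
            by_cases hyw : y = w
            · subst hyw; exact hm
            · exact Finset.mem_image_of_mem _ (Finset.mem_erase.2 ⟨hyw, hy⟩)
          have h1 := Finset.card_le_card hZsub
          have h2 : ((W.erase w).image fB).card ≤ W.card - 1 := by
            have := Finset.card_image_le (s := W.erase w) (f := fB)
            rw [Finset.card_erase_of_mem hw] at this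
            exact this
          omega
      · obtain ⟨w, hw, hsubL⟩ := hL
        have hinj : Set.InjOn fB ↑W := Finset.card_image_iff.1 (by rw [hZc])
        have hEcard1 : (CwS.erase (cV w)).card = W.card - 1 := by
          rw [Finset.card_erase_of_mem (Finset.mem_image_of_mem cV hw), hXc]
        have hEcard2 : ((W.erase w).image fB).card = W.card - 1 := by
          rw [Finset.card_image_of_injOn (hinj.mono (by
            simp only [Finset.coe_subset]
            exact_mod_cast Finset.erase_subset w W)), Finset.card_erase_of_mem hw]
        have hdisjE : Disjoint (CwS.erase (cV w)) ((W.erase w).image fB) := by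
          rw [Finset.disjoint_left]
          intro γ h1 h2
          exact hdisjXYZ γ (Finset.mem_union_left _ (Finset.erase_subset _ _ h1))
            (Finset.image_subset_image (Finset.erase_subset w W) h2)
        have hEcard : (CwS.erase (cV w) ∪ (W.erase w).image fB).card
            = (W.card - 1) + (W.card - 1) := by
          rw [Finset.card_union_of_disjoint hdisjE, hEcard1, hEcard2]
        have hEsub : CwS.erase (cV w) ∪ (W.erase w).image fB ⊆
            C1 w ∪ ((insert (fA w) (C2 w)) \ W.image fA) := by
          intro γ hγ
          have hγF : γ ∈ FB w := by
            refine hsubL ?_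
            rcases Finset.mem_union.1 hγ with h | h
            · exact Finset.mem_union_left _ (Finset.erase_subset _ _ h)
            · exact Finset.mem_union_right _ h
          have hγnotY : γ ∉ W.image fA := by
            intro hY
            rcases Finset.mem_union.1 hγ with h | h
            · exact hdisjXY γ (Finset.erase_subset _ _ h) hY
            · exact hdisjXYZ γ (Finset.mem_union_right _ hY)
                (Finset.image_subset_image (Finset.erase_subset w W) h)
          have hγnotcV : γ ≠ cV w := by
            rcases Finset.mem_union.1 hγ with h | h
            · exact (Finset.mem_erase.1 h).1
            · intro heq
              exact hdisjXYZ γ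
                (Finset.mem_union_left _ (heq ▸ Finset.mem_image_of_mem cV hw))
                (Finset.image_subset_image (Finset.erase_subset w W) h)
          rcases Finset.mem_insert.1 hγF with h | h
          · exact absurd h hγnotcV
          rcases Finset.mem_union.1 h with h | h
          · rcases Finset.mem_union.1 h with h | h
            · exact Finset.mem_union_left _ h
            · exact Finset.mem_union_right _ (Finset.mem_sdiff.2 ⟨h, hγnotY⟩)
          · exact absurd h hγnotY
        have hcard2 := Finset.card_le_card hEsub
        rw [hEcard] at hcard2
        have hCE := Finset.card_union_le (C1 w) ((insert (fA w) (C2 w)) \ W.image fA)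
        have hsd : ((insert (fA w) (C2 w)) \ W.image fA).card + 2 ≤ Δ ∨
            ((insert (fA w) (C2 w)) \ W.image fA).card = 0 := by
          rcases hA4 w hw with hcase | hcase
          · left
            have h1 : insert (fA w) (C2 w) = C2 w := Finset.insert_eq_self.2 hcase
            have h2 : (C2 w) \ W.image fA ⊆ (C2 w).erase (fA w) := by
              intro γ hγ
              rw [Finset.mem_sdiff] at hγ
              exact Finset.mem_erase.2
                ⟨fun heq => hγ.2 (heq ▸ Finset.mem_image_of_mem fA hw), hγ.1⟩
            have h3 := Finset.card_le_card h2
            have h4 : ((C2 w).erase (fA w)).card = (C2 w).card - 1 :=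
              Finset.card_erase_of_mem hcase
            have h5 := hC2card w hw
            have h6 : 0 < (C2 w).card := Finset.card_pos.2 ⟨fA w, hcase⟩
            rw [h1]
            omega
          · right
            rw [Finset.card_eq_zero, Finset.sdiff_eq_empty_iff_subset]
            intro γ hγ
            rcases Finset.mem_insert.1 hγ with rfl | h
            · exact Finset.mem_image_of_mem fA hw
            · exact Finset.image_subset_image (Finset.erase_subset w W) (hcase h)
        have hC1b := hC1card w hw
        rcases hsd with h | h <;> omega
    obtain ⟨cu, hcu⟩ := hFC
    -- the new colouring
    set c : VIElem G → Fin N := fun a => Sum.elim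
      (fun v => if v = u then cu else c' (Sum.inl v))
      (fun i : Inc G => if i.1.1 = u then fA (Sym2.Mem.other' i.2.2)
          else if Sym2.Mem.other' i.2.2 = u then fB i.1.1
          else c' (Sum.inr i)) a with hcdef
    -- evaluation lemmas
    have hother : ∀ {a b : V} (h : G.Adj a b), Sym2.Mem.other' (mkInc h).2.2 = b := by
      intro a b h
      exact Sym2.congr_right.1 (Sym2.other_spec' (mkInc h).2.2)
    have hcu_eval : c (Sum.inl u) = cu := by
      simp [hcdef]
    have hcv_eval : ∀ v : V, v ≠ u → c (Sum.inl v) = c' (Sum.inl v) := by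
      intro v hv
      simp [hcdef, hv]
    have hcA_eval : ∀ {w : V} (h : G.Adj u w), c (Sum.inr (mkInc h)) = fA w := by
      intro w h
      simp only [hcdef, Sum.elim_inr]
      rw [if_pos (show (mkInc h).1.1 = u from rfl), hother h]
    have hcB_eval : ∀ {w : V} (h : G.Adj w u), w ≠ u → c (Sum.inr (mkInc h)) = fB w := by
      intro w h hwu
      simp only [hcdef, Sum.elim_inr]
      rw [if_neg (show ¬((mkInc h).1.1 = u) from hwu), hother h, if_pos rfl]
      rfl
    have hcO_eval : ∀ (i : Inc G), u ∉ i.1.2 → c (Sum.inr i) = c' (Sum.inr i) := by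
      intro i hu2
      have h1 : i.1.1 ≠ u := fun h => hu2 (h ▸ i.2.2)
      have h2 : Sym2.Mem.other' i.2.2 ≠ u := fun h => hu2 (h ▸ Sym2.other_mem' i.2.2)
      simp only [hcdef, Sum.elim_inr]
      rw [if_neg h1, if_neg h2]
    -- classification of the elements inside s
    have classify : ∀ (a : VIElem G), InS s a →
        a = Sum.inl u ∨
        (∃ (w : V) (h : G.Adj u w), w ∈ W ∧ a = Sum.inr (mkInc h)) ∨
        (∃ (w : V) (h : G.Adj w u), w ∈ W ∧ a = Sum.inr (mkInc h)) ∨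
        (InS s' a ∧ c a = c' a) := by
      intro a ha
      cases a with
      | inl v =>
          by_cases hv : v = u
          · subst hv; exact Or.inl rfl
          · refine Or.inr (Or.inr (Or.inr ⟨?_, hcv_eval v hv⟩))
            exact Finset.mem_erase.2 ⟨hv, ha⟩
      | inr i =>
          by_cases hu2 : u ∈ i.1.2
          · obtain ⟨b, hadj, he⟩ := inc_repr i
            by_cases h1 : i.1.1 = u
            · have hadj2 : G.Adj u b := h1 ▸ hadj
              have hib : i = mkInc hadj := inc_eq_mkInc i hadj he
              have hmk : mkInc hadj = mkInc hadj2 := by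
                apply Subtype.ext
                apply Prod.ext
                · exact h1
                · show s(i.1.1, b) = s(u, b)
                  rw [h1]
              have hbW : b ∈ W := by
                have hbs : b ∈ s := ha b (he ▸ Sym2.mem_mk_right i.1.1 b)
                rw [hWdef]
                exact Finset.mem_inter.2 ⟨(mem_neighborFinset _ _ _).2 hadj2,
                  Finset.mem_erase.2 ⟨hadj2.ne', hbs⟩⟩
              exact Or.inr (Or.inl ⟨b, hadj2, hbW, by rw [hib, hmk]⟩)
            · have hbu : b = u := by
                have hmem : u ∈ s(i.1.1, b) := he ▸ hu2
                rcases Sym2.mem_iff.1 hmem with h | h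
                · exact absurd h.symm h1
                · exact h.symm
              subst hbu
              have hib : i = mkInc hadj := inc_eq_mkInc i hadj he
              have hW1 : i.1.1 ∈ W := by
                have h1s : i.1.1 ∈ s := ha i.1.1 i.2.2
                rw [hWdef]
                exact Finset.mem_inter.2 ⟨(mem_neighborFinset _ _ _).2 hadj.symm,
                  Finset.mem_erase.2 ⟨h1, h1s⟩⟩
              exact Or.inr (Or.inr (Or.inl ⟨i.1.1, hadj, hW1, congrArg Sum.inr hib⟩))
          · refine Or.inr (Or.inr (Or.inr ⟨?_, hcO_eval i hu2⟩))
            intro x hx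
            have hxs : x ∈ s := ha x hx
            have hxu : x ≠ u := fun h => hu2 (h ▸ hx)
            exact Finset.mem_erase.2 ⟨hxu, hxs⟩
    -- new element vs old element
    have hU_old : ∀ (bo : VIElem G), InS s' bo → VIAdj G (Sum.inl u) bo → cu ≠ c' bo := by
      intro bo hbo hadj
      cases bo with
      | inl v =>
          have hvW : v ∈ W := by
            rw [hWdef]
            exact Finset.mem_inter.2 ⟨(mem_neighborFinset _ _ _).2 hadj, hbo⟩
          intro heq
          apply hcu
          rw [hFCdef]
          exact Finset.mem_union_left _
            (Finset.mem_union_left _ (heq ▸ Finset.mem_image_of_mem cV hvW))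
      | inr j =>
          exact absurd ((hbo : ∀ x ∈ j.1.2, x ∈ s.erase u) u hadj) hus'
    have hA_old : ∀ (w : V), w ∈ W → ∀ (h : G.Adj u w) (bo : VIElem G), InS s' bo →
        VIAdj G (Sum.inr (mkInc h)) bo → fA w ≠ c' bo := by
      intro w hwW h bo hbo hadj
      cases bo with
      | inl v =>
          have hv : v = w := by
            rcases Sym2.mem_iff.1 (hadj : v ∈ s(u, w)) with h1 | h1
            · exact absurd h1 (hs'ne v hbo)
            · exact h1
          intro heq
          apply hA1 w hwW
          rw [heq, hv]
          exact Finset.mem_insert_self _ _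
      | inr j =>
          obtain ⟨hne, hor⟩ := hadj
          have hjne : ∀ x ∈ j.1.2, x ∈ s' := hbo
          rcases hor with h1 | h1 | h1 | h1
          · have h1' : u = j.1.1 := h1
            refine absurd ?_ hus'
            rw [h1']
            exact hjne j.1.1 j.2.2
          · have h1' : s(u,w) = j.1.2 := h1
            have hu2 : u ∈ j.1.2 := by
              rw [← h1']
              exact Sym2.mem_mk_left u w
            exact absurd (hjne u hu2) hus'
          · have hj1 : j.1.1 = w := Sym2.congr_right.1 (h1 : s(u, j.1.1) = s(u, w))
            obtain ⟨b, hadjb, heb⟩ := inc_repr j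
            have hjb : j = mkInc hadjb := inc_eq_mkInc j hadjb heb
            have hbs2 : b ∈ s' := hjne b (heb ▸ Sym2.mem_mk_right j.1.1 b)
            have hadjwb : G.Adj w b := by rw [← hj1]; exact hadjb
            have hmem : c' (Sum.inr j) ∈ C1 w := by
              rw [hC1def]
              refine Finset.mem_image.2 ⟨b, Finset.mem_inter.2
                ⟨(mem_neighborFinset _ _ _).2 hadjwb, hbs2⟩, ?_⟩
              rw [J_eq hadjwb]
              have hmk2 : mkInc hadjwb = j := by
                rw [hjb]
                apply Subtype.ext
                apply Prod.ext
                · exact hj1.symm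
                · show s(w, b) = s(j.1.1, b)
                  rw [hj1]
              rw [hmk2]
            intro heq
            apply hA1 w hwW
            rw [heq]
            exact Finset.mem_insert_of_mem hmem
          · have h1' : s(u, j.1.1) = j.1.2 := h1
            have hu2 : u ∈ j.1.2 := by
              rw [← h1']
              exact Sym2.mem_mk_left _ _
            exact absurd (hjne u hu2) hus'
    have hB_old : ∀ (w : V), w ∈ W → ∀ (h : G.Adj w u) (bo : VIElem G), InS s' bo →
        VIAdj G (Sum.inr (mkInc h)) bo → fB w ≠ c' bo := by
      intro w hwW h bo hbo hadj
      have hFBw := hB1 w hwW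
      cases bo with
      | inl v =>
          have hv : v = w := by
            rcases Sym2.mem_iff.1 (hadj : v ∈ s(w, u)) with h1 | h1
            · exact h1
            · exact absurd h1 (hs'ne v hbo)
          intro heq
          apply hFBw
          rw [heq, hv]
          exact Finset.mem_insert_self _ _
      | inr j =>
          obtain ⟨hne, hor⟩ := hadj
          have hjne : ∀ x ∈ j.1.2, x ∈ s' := hbo
          rcases hor with h1 | h1 | h1 | h1
          · -- j is a first incidence of w
            obtain ⟨b, hadjb, heb⟩ := inc_repr j
            have h1' : w = j.1.1 := h1
            have hbs2 : b ∈ s' := hjne b (heb ▸ Sym2.mem_mk_right j.1.1 b)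
            have hadjwb : G.Adj w b := by rw [h1']; exact hadjb
            have hmem : c' (Sum.inr j) ∈ C1 w := by
              rw [hC1def]
              refine Finset.mem_image.2 ⟨b, Finset.mem_inter.2
                ⟨(mem_neighborFinset _ _ _).2 hadjwb, hbs2⟩, ?_⟩
              rw [J_eq hadjwb]
              have hmk2 : mkInc hadjwb = j := by
                rw [inc_eq_mkInc j hadjb heb]
                apply Subtype.ext
                apply Prod.ext
                · exact h1'
                · show s(w, b) = s(j.1.1, b)
                  rw [h1']
              rw [hmk2]
            intro heq
            apply hFBw
            rw [heq]
            exact Finset.mem_insert_of_mem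
              (Finset.mem_union_left _ (Finset.mem_union_left _ hmem))
          · have h1' : s(w,u) = j.1.2 := h1
            have hu2 : u ∈ j.1.2 := by
              rw [← h1']
              exact Sym2.mem_mk_right w u
            exact absurd (hjne u hu2) hus'
          · have hj1 : j.1.1 = u := Sym2.congr_right.1 h1
            refine absurd ?_ hus'
            rw [← hj1]
            exact hjne j.1.1 j.2.2
          · -- j is a second incidence of w
            have h1' : s(w, j.1.1) = j.1.2 := h1
            have hedge : s(w, j.1.1) ∈ G.edgeSet := by
              rw [h1']
              exact j.2.1
            have hadjj : G.Adj w j.1.1 := G.mem_edgeSet.1 hedge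
            have hj2 : j.1.2 = s(j.1.1, w) := by
              rw [← h1', Sym2.eq_swap]
            have hjb : j = mkInc hadjj.symm := inc_eq_mkInc j hadjj.symm hj2
            have hj1s : j.1.1 ∈ s' := hjne j.1.1 j.2.2
            have hmem : c' (Sum.inr j) ∈ C2 w := by
              rw [hC2def]
              refine Finset.mem_image.2 ⟨j.1.1, Finset.mem_inter.2
                ⟨(mem_neighborFinset _ _ _).2 hadjj, hj1s⟩, ?_⟩
              rw [J_eq hadjj.symm, ← hjb]
            intro heq
            apply hFBw
            rw [heq]
            exact Finset.mem_insert_of_mem (Finset.mem_union_left _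
              (Finset.mem_union_right _ (Finset.mem_insert_of_mem hmem)))
    -- new vs new
    have hUA : ∀ w ∈ W, cu ≠ fA w := by
      intro w hw heq
      apply hcu
      rw [hFCdef, heq]
      exact Finset.mem_union_left _
        (Finset.mem_union_right _ (Finset.mem_image_of_mem fA hw))
    have hUB : ∀ w ∈ W, cu ≠ fB w := by
      intro w hw heq
      apply hcu
      rw [hFCdef, heq]
      exact Finset.mem_union_right _ (Finset.mem_image_of_mem fB hw)
    have hAB : ∀ w ∈ W, ∀ x ∈ W, fA w ≠ fB x := by
      intro w hw x hx heq
      apply hB1 x hx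
      rw [← heq]
      exact Finset.mem_insert_of_mem
        (Finset.mem_union_right _ (Finset.mem_image_of_mem fA hw))
    refine ⟨c, ?_, ?_⟩
    · -- properness
      intro a b ha hb hadj
      rcases classify a ha with rfl | ⟨w, hAdjw, hwW, rfl⟩ | ⟨w, hAdjw, hwW, rfl⟩ | ⟨has2, hca⟩
      · rcases classify b hb with rfl | ⟨x, hAdjx, hxW, rfl⟩ | ⟨x, hAdjx, hxW, rfl⟩ |
          ⟨hbs2, hcb⟩
        · exact absurd (hadj : G.Adj u u) (G.irrefl)
        · rw [hcu_eval, hcA_eval hAdjx]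
          exact hUA x hxW
        · rw [hcu_eval, hcB_eval hAdjx (hs'ne x (hWs' x hxW))]
          exact hUB x hxW
        · rw [hcu_eval, hcb]
          exact hU_old b hbs2 hadj
      · rcases classify b hb with rfl | ⟨x, hAdjx, hxW, rfl⟩ | ⟨x, hAdjx, hxW, rfl⟩ |
          ⟨hbs2, hcb⟩
        · rw [hcA_eval hAdjw, hcu_eval]
          exact (hUA w hwW).symm
        · rw [hcA_eval hAdjw, hcA_eval hAdjx]
          by_cases hwx : w = x
          · subst hwx
            exact absurd (Subtype.ext rfl) hadj.1
          · intro heq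
            exact hwx (hA2 (Finset.mem_coe.2 hwW) (Finset.mem_coe.2 hxW) heq)
        · rw [hcA_eval hAdjw, hcB_eval hAdjx (hs'ne x (hWs' x hxW))]
          exact hAB w hwW x hxW
        · rw [hcA_eval hAdjw, hcb]
          exact hA_old w hwW hAdjw b hbs2 hadj
      · rcases classify b hb with rfl | ⟨x, hAdjx, hxW, rfl⟩ | ⟨x, hAdjx, hxW, rfl⟩ |
          ⟨hbs2, hcb⟩
        · rw [hcB_eval hAdjw (hs'ne w (hWs' w hwW)), hcu_eval]
          exact (hUB w hwW).symm
        · rw [hcB_eval hAdjw (hs'ne w (hWs' w hwW)), hcA_eval hAdjx]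
          exact (hAB x hxW w hwW).symm
        · exfalso
          obtain ⟨hne, hor⟩ := hadj
          by_cases hwx : w = x
          · subst hwx
            exact hne (Subtype.ext rfl)
          · rcases hor with h1 | h1 | h1 | h1
            · exact hwx h1
            · rcases Sym2.eq_iff.1 (h1 : s(w,u) = s(x,u)) with ⟨h2, _⟩ | ⟨h2, h3⟩
              · exact hwx h2
              · exact (hs'ne w (hWs' w hwW)) h2
            · exact (hs'ne x (hWs' x hxW))
                (Sym2.congr_right.1 (h1 : s(w, x) = s(w, u)))
            · rcases Sym2.eq_iff.1 (h1 : s(w,x) = s(x,u)) with ⟨h2, h3⟩ | ⟨h2, h3⟩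
              · exact (hs'ne x (hWs' x hxW)) h3
              · exact (hs'ne w (hWs' w hwW)) h2
        · rw [hcB_eval hAdjw (hs'ne w (hWs' w hwW)), hcb]
          exact hB_old w hwW hAdjw b hbs2 hadj
      · rcases classify b hb with rfl | ⟨x, hAdjx, hxW, rfl⟩ | ⟨x, hAdjx, hxW, rfl⟩ |
          ⟨hbs2, hcb⟩
        · rw [hca, hcu_eval]
          exact (hU_old a has2 (VIAdj_symm hadj)).symm
        · rw [hca, hcA_eval hAdjx]
          exact (hA_old x hxW hAdjx a has2 (VIAdj_symm hadj)).symm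
        · rw [hca, hcB_eval hAdjx (hs'ne x (hWs' x hxW))]
          exact (hB_old x hxW hAdjx a has2 (VIAdj_symm hadj)).symm
        · rw [hca, hcb]
          exact hprop' a b has2 hbs2 hadj
    · -- the second-incidence invariant
      intro v hv
      by_cases hvu : v = u
      · subst hvu
        have himg : (G.neighborFinset v ∩ s.erase v).image (fun x => c (J G x v)) =
            W.image fB := by
          rw [← hs'def, ← hWdef]
          apply Finset.image_congr
          intro x hx
          have hadjxu : G.Adj x v := (hWadj x hx).symm
          show c (J G x v) = fB x
          rw [J_eq hadjxu]
          exact hcB_eval hadjxu (hs'ne x (hWs' x hx))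
        rw [himg]
        exact le_trans Finset.card_image_le hWk
      · have hvs2 : v ∈ s' := Finset.mem_erase.2 ⟨hvu, hv⟩
        by_cases hvW : v ∈ W
        · have hseteq : G.neighborFinset v ∩ s.erase v =
              insert u (G.neighborFinset v ∩ s') := by
            ext x
            constructor
            · intro hx
              obtain ⟨h1, h3⟩ := Finset.mem_inter.1 hx
              obtain ⟨h4, h5⟩ := Finset.mem_erase.1 h3
              by_cases hxu : x = u
              · exact Finset.mem_insert.2 (Or.inl hxu)
              · refine Finset.mem_insert.2 (Or.inr (Finset.mem_inter.2 ⟨h1, ?_⟩))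
                rw [hs'def]
                exact Finset.mem_erase.2 ⟨hxu, h5⟩
            · intro hx
              rcases Finset.mem_insert.1 hx with rfl | hx
              · refine Finset.mem_inter.2
                  ⟨(mem_neighborFinset _ _ _).2 (hWadj v hvW).symm, ?_⟩
                exact Finset.mem_erase.2 ⟨fun hh => hvu hh.symm, hus⟩
              · obtain ⟨h1, h2⟩ := Finset.mem_inter.1 hx
                have h22 : x ∈ s.erase u := by rw [← hs'def]; exact h2
                obtain ⟨hxu, hxs⟩ := Finset.mem_erase.1 h22
                refine Finset.mem_inter.2 ⟨h1, ?_⟩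
                exact Finset.mem_erase.2 ⟨((mem_neighborFinset _ _ _).1 h1).ne', hxs⟩
          rw [hseteq, Finset.image_insert]
          have h1 : c (J G u v) = fA v := by
            rw [J_eq (hWadj v hvW)]
            exact hcA_eval (hWadj v hvW)
          have h2 : (G.neighborFinset v ∩ s').image (fun x => c (J G x v)) = C2 v := by
            rw [hC2def]
            apply Finset.image_congr
            intro x hx
            obtain ⟨hx1, hx2⟩ := Finset.mem_inter.1 hx
            have hadjvx : G.Adj v x := (mem_neighborFinset _ _ _).1 hx1
            show c (J G x v) = c' (J G x v)
            rw [J_eq hadjvx.symm]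
            refine hcO_eval (mkInc hadjvx.symm) ?_
            intro hmem
            rcases Sym2.mem_iff.1 hmem with hh | hh
            · exact (hs'ne x hx2) hh.symm
            · exact hvu hh.symm
          rw [h1, h2]
          exact hA3 v hvW
        · have hseteq : G.neighborFinset v ∩ s.erase v =
              G.neighborFinset v ∩ s'.erase v := by
            ext x
            constructor
            · intro hx
              obtain ⟨h1, h3⟩ := Finset.mem_inter.1 hx
              obtain ⟨h4, h5⟩ := Finset.mem_erase.1 h3
              have hxu : x ≠ u := by
                rintro rfl
                apply hvW
                rw [hWdef]
                exact Finset.mem_inter.2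
                  ⟨(mem_neighborFinset _ _ _).2 ((mem_neighborFinset _ _ _).1 h1).symm, hvs2⟩
              refine Finset.mem_inter.2 ⟨h1, Finset.mem_erase.2 ⟨h4, ?_⟩⟩
              rw [hs'def]
              exact Finset.mem_erase.2 ⟨hxu, h5⟩
            · intro hx
              obtain ⟨h1, h3⟩ := Finset.mem_inter.1 hx
              obtain ⟨h4, h5⟩ := Finset.mem_erase.1 h3
              exact Finset.mem_inter.2 ⟨h1, Finset.mem_erase.2 ⟨h4, hss' h5⟩⟩
          have himg : (G.neighborFinset v ∩ s'.erase v).image (fun x => c (J G x v)) =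
              (G.neighborFinset v ∩ s'.erase v).image (fun x => c' (J G x v)) := by
            apply Finset.image_congr
            intro x hx
            obtain ⟨h1, h3⟩ := Finset.mem_inter.1 hx
            have hadjvx : G.Adj v x := (mem_neighborFinset _ _ _).1 h1
            have hxs2 : x ∈ s' := Finset.mem_of_mem_erase h3
            show c (J G x v) = c' (J G x v)
            rw [J_eq hadjvx.symm]
            refine hcO_eval _ ?_
            intro hmem
            rcases Sym2.mem_iff.1 hmem with hh | hh
            · exact (hs'ne x hxs2) hh.symm
            · exact hvu hh.symm
          rw [hseteq, himg]
          exact hinv' v hvs2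


end Key

/-- Let `k ≥ 1` and let `G` be a `k`-degenerate finite simple graph with
maximum degree `Δ(G) ≥ 2`. Then `χ_{vi,k}(G) ≤ Δ(G) + 2k`. -/
theorem chiVIS_le_of_degenerate {V : Type*} [Fintype V] [DecidableEq V]
    (G : SimpleGraph V) (k : ℕ) (hk : 1 ≤ k) (hdeg : Degenerate k G)
    (hΔ : 2 ≤ maxDeg G) :
    chiVIS G k ≤ maxDeg G + 2 * k := by
  classical
  haveI : DecidableRel G.Adj := Classical.decRel _
  have hdegΔ : ∀ v : V, (G.neighborFinset v).card ≤ maxDeg G := by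
    intro v
    have h1 : (G.neighborSet v).ncard ≤ maxDeg G :=
      Finset.le_sup (f := fun v => (G.neighborSet v).ncard) (Finset.mem_univ v)
    have h2 : (G.neighborSet v).ncard = (G.neighborFinset v).card := by
      rw [neighborFinset_def, Set.ncard_eq_toFinset_card']
    rwa [h2] at h1
  obtain ⟨c, hp, hi⟩ := key G k (maxDeg G) hk hΔ hdeg hdegΔ Finset.univ
  have hmem : (maxDeg G + 2 * k) ∈
      {m | ∃ c : VIElem G → Fin m, IsVISColoring G k c} := by
    refine ⟨c, ?_, ?_⟩
    · intro a b hadj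
      refine hp a b ?_ ?_ hadj
      · cases a with
        | inl v => exact Finset.mem_univ v
        | inr i => intro x _; exact Finset.mem_univ x
      · cases b with
        | inl v => exact Finset.mem_univ v
        | inr i => intro x _; exact Finset.mem_univ x
    · intro v
      have hseteq : (fun i => c (Sum.inr i)) '' I2 G v =
          ↑((G.neighborFinset v ∩ Finset.univ.erase v).image (fun x => c (J G x v))) := by
        ext γ
        constructor
        · rintro ⟨i, hi2, rfl⟩
          obtain ⟨hne, he⟩ := hi2
          have hadj : G.Adj i.1.1 v := by
            have hes : s(i.1.1, v) ∈ G.edgeSet := he ▸ i.2.1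
            exact G.mem_edgeSet.1 hes
          refine Finset.mem_coe.2 (Finset.mem_image.2 ⟨i.1.1, ?_, ?_⟩)
          · exact Finset.mem_inter.2 ⟨(mem_neighborFinset _ _ _).2 hadj.symm,
              Finset.mem_erase.2 ⟨hne, Finset.mem_univ _⟩⟩
          · rw [J_eq hadj, ← inc_eq_mkInc i hadj he]
        · intro hγ
          obtain ⟨x, hx, rfl⟩ := Finset.mem_image.1 (Finset.mem_coe.1 hγ)
          obtain ⟨h1, _⟩ := Finset.mem_inter.1 hx
          have hadj : G.Adj x v := ((mem_neighborFinset _ _ _).1 h1).symm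
          refine ⟨mkInc hadj, ⟨hadj.ne, rfl⟩, ?_⟩
          rw [J_eq hadj]
      rw [hseteq, Set.ncard_coe_finset]
      exact hi v (Finset.mem_univ v)
  exact Nat.sInf_le hmem
end

section
/- Let F be a finite forest. Then χ_{vi,1}(F) = 1 if Δ(F) = 0, χ_{vi,1}(F) = 4 if Δ(F) = 1, and χ_{vi,1}(F) = Δ(F) + 2 if Δ(F) ≥ 2. -/
open SimpleGraph

variable {V : Type*}

section ChiVISAux

variable {V : Type*}

/-- The other endpoint of an incidence. -/
noncomputable def incOther [DecidableEq V] {G : SimpleGraph V} (i : Inc G) : V :=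
  Sym2.Mem.other' i.2.2

lemma incOther_spec [DecidableEq V] {G : SimpleGraph V} (i : Inc G) :
    s(i.1.1, incOther i) = i.1.2 := Sym2.other_spec' i.2.2

lemma adj_incOther [DecidableEq V] {G : SimpleGraph V} (i : Inc G) :
    G.Adj i.1.1 (incOther i) := by
  rw [← SimpleGraph.mem_edgeSet, incOther_spec i]; exact i.2.1

/-- The coloring associated to a pair of vertex-functions. -/
noncomputable def viCol [DecidableEq V] (G : SimpleGraph V) {k : ℕ} (f a : V → Fin k) :
    VIElem G → Fin k
  | Sum.inl v => a v
  | Sum.inr i => f (incOther i)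

lemma isVIS_of_fa [DecidableEq V] (G : SimpleGraph V) {k : ℕ} (f a : V → Fin k)
    (h1 : ∀ u v, G.Adj u v → a u ≠ a v)
    (h2 : ∀ u v, G.Adj u v → f u ≠ f v)
    (h3 : ∀ u v w, G.Adj u v → G.Adj u w → v ≠ w → f v ≠ f w)
    (h4 : ∀ u v, G.Adj u v → a u ≠ f u)
    (h5 : ∀ u v, G.Adj u v → a u ≠ f v) :
    IsVISColoring G 1 (viCol G f a) := by
  have key : ∀ (u : V) (i : Inc G), u ∈ i.1.2 → a u ≠ f (incOther i) := by
    intro u i hu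
    rw [← incOther_spec i, Sym2.mem_iff] at hu
    rcases hu with rfl | rfl
    · exact h5 _ _ (adj_incOther i)
    · exact h4 _ _ (adj_incOther i).symm
  constructor
  · rintro (u | i) (w | j) hadj
    · exact h1 _ _ hadj
    · exact key u j hadj
    · exact fun h => key w i hadj h.symm
    · obtain ⟨hij, hcase⟩ := hadj
      have hoi := adj_incOther i
      have hoj := adj_incOther j
      show f (incOther i) ≠ f (incOther j)
      rcases hcase with hxy | hee | hsi | hsj
      · have hne : incOther i ≠ incOther j := by
          intro h
          apply hij
          apply Subtype.ext
          apply Prod.ext hxy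
          rw [← incOther_spec i, ← incOther_spec j, hxy, h]
        exact h3 i.1.1 _ _ hoi (hxy ▸ hoj) hne
      · rw [← incOther_spec i, ← incOther_spec j, Sym2.eq_iff] at hee
        rcases hee with ⟨hxy, ho⟩ | ⟨hx, hy⟩
        · exact absurd
            (Subtype.ext (Prod.ext hxy
              (by rw [← incOther_spec i, ← incOther_spec j, hxy, ho]))) hij
        · rw [hy]
          exact h2 _ _ hoj
      · rw [← incOther_spec i, Sym2.eq_iff] at hsi
        rcases hsi with ⟨-, hy⟩ | ⟨hx, -⟩
        · rw [← hy]
          exact h2 _ _ hoj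
        · exact absurd hx hoi.ne
      · rw [← incOther_spec j, Sym2.eq_iff] at hsj
        rcases hsj with ⟨hx, hy⟩ | ⟨hx, -⟩
        · rw [← hy, ← hx]; exact (h2 _ _ hoi).symm
        · rw [← hx]; exact (h2 _ _ hoi).symm
  · intro v
    have hsub : (fun i => viCol G f a (Sum.inr i)) '' I2 G v ⊆ {f v} := by
      rintro col ⟨i, ⟨hne, heq⟩, rfl⟩
      have hov : incOther i = v := by
        rw [← incOther_spec i, Sym2.eq_iff] at heq
        rcases heq with ⟨-, h⟩ | ⟨h, -⟩
        · exact h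
        · exact absurd h hne
      simp [viCol, hov]
    exact le_trans (Set.ncard_le_ncard hsub (Set.finite_singleton _)) (by simp)

lemma exists_leaf [Fintype V] [DecidableEq V] {F : SimpleGraph V} (hF : F.IsAcyclic)
    {u₀ w₀ : V} (h0 : F.Adj u₀ w₀) :
    ∃ v w, F.Adj v w ∧ ∀ x, F.Adj v x → x = w := by
  classical
  have hP : (Walk.cons h0.symm Walk.nil : F.Walk w₀ u₀).IsPath := by simp [h0.ne']
  obtain ⟨⟨v, q⟩, -, hmax⟩ :=
    Finset.exists_max_image (Finset.univ : Finset (Σ v : V, F.Path v u₀))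
      (fun q => q.2.1.length)
      ⟨⟨w₀, ⟨Walk.cons h0.symm Walk.nil, hP⟩⟩, Finset.mem_univ _⟩
  obtain ⟨p, hp⟩ := q
  have hlen : 1 ≤ p.length := by
    simpa using hmax ⟨w₀, ⟨Walk.cons h0.symm Walk.nil, hP⟩⟩ (Finset.mem_univ _)
  cases p with
  | nil => simp at hlen
  | @cons _ w _ hvw q' =>
    rw [Walk.cons_isPath_iff] at hp
    obtain ⟨hq'path, hvsup⟩ := hp
    refine ⟨v, w, hvw, ?_⟩
    intro x hx
    by_contra hxw
    have hxv : x ≠ v := fun h => F.irrefl (h ▸ hx)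
    have hedge_not : s(x, v) ∉ (Walk.cons hvw q').edges := by
      intro hmem'
      rw [Walk.edges_cons] at hmem'
      rcases List.mem_cons.mp hmem' with heq | hmem''
      · rw [Sym2.eq_iff] at heq
        rcases heq with ⟨h1, -⟩ | ⟨h1, -⟩
        · exact hxv h1
        · exact hxw h1
      · exact hvsup (Walk.snd_mem_support_of_mem_edges q' hmem'')
    by_cases hmem : x ∈ (Walk.cons hvw q').support
    · have htpath : ((Walk.cons hvw q').takeUntil x hmem).IsPath :=
        ((Walk.cons_isPath_iff hvw q').mpr ⟨hq'path, hvsup⟩).takeUntil hmem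
      have hnotedge : s(x, v) ∉ ((Walk.cons hvw q').takeUntil x hmem).edges :=
        fun h => hedge_not (Walk.edges_takeUntil_subset _ hmem h)
      exact hF _ ((Walk.cons_isCycle_iff _ hx.symm).mpr ⟨htpath, hnotedge⟩)
    · have hppath : (Walk.cons hx.symm (Walk.cons hvw q')).IsPath :=
        ((Walk.cons_isPath_iff hvw q').mpr ⟨hq'path, hvsup⟩).cons hmem
      have := hmax ⟨x, ⟨Walk.cons hx.symm (Walk.cons hvw q'), hppath⟩⟩ (Finset.mem_univ _)
      simp [Walk.length_cons] at this

lemma exists_fa [Fintype V] [DecidableEq V] {D : ℕ} (hD : 2 ≤ D) :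
    ∀ (n : ℕ) (F : SimpleGraph V), F.edgeSet.ncard = n → F.IsAcyclic →
      (∀ v, (F.neighborSet v).ncard ≤ D) →
      ∃ f a : V → Fin (D + 2),
        (∀ u v, F.Adj u v → a u ≠ a v) ∧
        (∀ u v, F.Adj u v → f u ≠ f v) ∧
        (∀ u v w, F.Adj u v → F.Adj u w → v ≠ w → f v ≠ f w) ∧
        (∀ u, a u ≠ f u) ∧
        (∀ u v, F.Adj u v → a u ≠ f v) := by
  intro n
  induction n using Nat.strong_induction_on with
  | _ n ih =>
    intro F hn hac hdeg
    by_cases hE : ∃ u w, F.Adj u w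
    case neg =>
      push_neg at hE
      refine ⟨fun _ => ⟨1, by omega⟩, fun _ => ⟨0, by omega⟩,
        fun u v h => absurd h (hE u v), fun u v h => absurd h (hE u v),
        fun u v w h _ _ => absurd h (hE u v), fun u => ?_,
        fun u v h => absurd h (hE u v)⟩
      intro h
      have := congrArg Fin.val h
      simp at this
    case pos =>
      obtain ⟨u₀, w₀, h0⟩ := hE
      obtain ⟨v, w, hvw, hleaf⟩ := exists_leaf hac h0
      set F' := F.deleteEdges {s(v, w)} with hF'
      have hle : F' ≤ F := SimpleGraph.deleteEdges_le _
      have hadj' : ∀ x y, F'.Adj x y ↔ F.Adj x y ∧ s(x, y) ≠ s(v, w) := by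
        intro x y
        rw [hF', SimpleGraph.deleteEdges_adj]
        simp
      have hac' : F'.IsAcyclic := fun a c hc => hac (c.mapLe hle) (hc.mapLe hle)
      have hsub : ∀ x, F'.neighborSet x ⊆ F.neighborSet x := fun x y hy => ((hadj' x y).mp hy).1
      have hdeg' : ∀ x, (F'.neighborSet x).ncard ≤ D := fun x =>
        le_trans (Set.ncard_le_ncard (hsub x) (Set.toFinite _)) (hdeg x)
      have hme : s(v, w) ∈ F.edgeSet := hvw
      have hlt : F'.edgeSet.ncard < n := by
        rw [hF', SimpleGraph.edgeSet_deleteEdges, ← hn]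
        exact Set.ncard_diff_singleton_lt_of_mem hme (Set.toFinite _)
      obtain ⟨f', a', c1, c2, c3, c4, c5⟩ := ih _ hlt F' rfl hac' hdeg'
      have hwv : v ∈ F.neighborSet w := hvw.symm
      set N : Finset V := (F.neighborSet w \ {v}).toFinite.toFinset with hN
      have hNcard : N.card = (F.neighborSet w \ {v}).ncard :=
        (Set.ncard_eq_toFinset_card _ _).symm
      have hNmem : ∀ x, F.Adj w x → x ≠ v → x ∈ N := by
        intro x hx hxv
        rw [hN, Set.Finite.mem_toFinset]
        exact ⟨hx, hxv⟩
      set Forb1 : Finset (Fin (D + 2)) := insert (a' w) (insert (f' w) (N.image f')) with hForb1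
      have hdiffcard := Set.ncard_diff_singleton_of_mem hwv
      have hdw := hdeg w
      have hcard1 : Forb1.card < D + 2 := by
        have e1 := Finset.card_insert_le (a' w) (insert (f' w) (N.image f'))
        have e2 := Finset.card_insert_le (f' w) (N.image f')
        have e3 := Finset.card_image_le (s := N) (f := f')
        rw [← hForb1] at e1
        omega
      have hnfex : ∃ x : Fin (D + 2), x ∉ Forb1 := by
        by_contra hcon
        push_neg at hcon
        have hsub2 : (Finset.univ : Finset (Fin (D + 2))) ⊆ Forb1 := fun x _ => hcon x
        have := Finset.card_le_card hsub2
        simp only [Finset.card_univ, Fintype.card_fin] at this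
        omega
      obtain ⟨nf, hnf⟩ := hnfex
      have hnf_a : nf ≠ a' w := fun h => hnf (by rw [hForb1, h]; simp)
      have hnf_f : nf ≠ f' w := fun h => hnf (by rw [hForb1, h]; simp)
      have hnf_N : ∀ x ∈ N, nf ≠ f' x := by
        intro x hx h
        exact hnf (by rw [hForb1, h]; simp only [Finset.mem_insert, Finset.mem_image]
                      right; right; exact ⟨x, hx, rfl⟩)
      have hnaex : ∃ x : Fin (D + 2), x ∉ ({a' w, f' w, nf} : Finset (Fin (D + 2))) := by
        by_contra hcon
        push_neg at hcon
        have hsub2 : (Finset.univ : Finset (Fin (D + 2))) ⊆ {a' w, f' w, nf} := fun x _ => hcon x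
        have h1 := Finset.card_le_card hsub2
        have e1 := Finset.card_insert_le (a' w) ({f' w, nf} : Finset (Fin (D + 2)))
        have e2 := Finset.card_insert_le (f' w) ({nf} : Finset (Fin (D + 2)))
        simp only [Finset.card_univ, Fintype.card_fin] at h1
        rw [Finset.card_singleton] at e2
        omega
      obtain ⟨na, hna⟩ := hnaex
      simp only [Finset.mem_insert, Finset.mem_singleton, not_or] at hna
      obtain ⟨hna_a, hna_f, hna_nf⟩ := hna
      set f : V → Fin (D + 2) := Function.update f' v nf with hfdef
      set a : V → Fin (D + 2) := Function.update a' v na with hadef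
      have hfv : f v = nf := Function.update_self _ _ _
      have hav : a v = na := Function.update_self _ _ _
      have hfo : ∀ x, x ≠ v → f x = f' x := fun x hx => Function.update_of_ne hx _ _
      have hao : ∀ x, x ≠ v → a x = a' x := fun x hx => Function.update_of_ne hx _ _
      have hwnev : w ≠ v := hvw.ne'
      have hF'adj : ∀ x y, F.Adj x y → x ≠ v → y ≠ v → F'.Adj x y := by
        intro x y h hx hy
        rw [hadj' x y]
        refine ⟨h, fun heq => ?_⟩
        rw [Sym2.eq_iff] at heq
        rcases heq with ⟨h1, -⟩ | ⟨-, h1⟩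
        · exact hx h1
        · exact hy h1
      have hleaf' : ∀ x, F.Adj x v → x = w := fun x hx => hleaf x hx.symm
      refine ⟨f, a, ?_, ?_, ?_, ?_, ?_⟩
      · intro x y h
        by_cases hx : x = v
        · subst hx
          rw [hleaf y h, hav, hao w hwnev]
          exact fun hh => hna_a hh
        · by_cases hy : y = v
          · subst hy
            rw [hleaf' x h, hav, hao w hwnev]
            exact fun hh => hna_a hh.symm
          · rw [hao x hx, hao y hy]
            exact c1 _ _ (hF'adj x y h hx hy)
      · intro x y h
        by_cases hx : x = v
        · subst hx
          rw [hleaf y h, hfv, hfo w hwnev]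
          exact hnf_f
        · by_cases hy : y = v
          · subst hy
            rw [hleaf' x h, hfv, hfo w hwnev]
            exact fun hh => hnf_f hh.symm
          · rw [hfo x hx, hfo y hy]
            exact c2 _ _ (hF'adj x y h hx hy)
      · intro u x y h1 h2 hxy
        by_cases hx : x = v
        · have hu : u = w := hleaf' u (hx ▸ h1)
          have hyv : y ≠ v := fun hh => hxy (hx.trans hh.symm)
          rw [hx, hfv, hfo y hyv]
          exact hnf_N y (hNmem y (hu ▸ h2) hyv)
        · by_cases hy : y = v
          · have hu : u = w := hleaf' u (hy ▸ h2)
            rw [hy, hfv, hfo x hx]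
            exact fun hh => (hnf_N x (hNmem x (hu ▸ h1) hx)) hh.symm
          · rw [hfo x hx, hfo y hy]
            by_cases hu : u = v
            · subst hu
              exact absurd ((hleaf x h1).trans (hleaf y h2).symm) hxy
            · exact c3 u x y (hF'adj u x h1 hu hx) (hF'adj u y h2 hu hy) hxy
      · intro u
        by_cases hu : u = v
        · subst hu
          rw [hav, hfv]
          exact hna_nf
        · rw [hao u hu, hfo u hu]
          exact c4 u
      · intro x y h
        by_cases hx : x = v
        · subst hx
          rw [hleaf y h, hav, hfo w hwnev]
          exact hna_f
        · by_cases hy : y = v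
          · subst hy
            rw [hleaf' x h, hfv, hao w hwnev]
            exact fun hh => hnf_a hh.symm
          · rw [hao x hx, hfo y hy]
            exact c5 _ _ (hF'adj x y h hx hy)


lemma four_le_of_ne {k : ℕ} (x1 x2 x3 x4 : Fin k) (h12 : x1 ≠ x2) (h13 : x1 ≠ x3)
    (h14 : x1 ≠ x4) (h23 : x2 ≠ x3) (h24 : x2 ≠ x4) (h34 : x3 ≠ x4) : 4 ≤ k := by
  have hcard : ({x1, x2, x3, x4} : Finset (Fin k)).card = 4 := by
    rw [Finset.card_insert_of_notMem (by simp [h12, h13, h14]),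
        Finset.card_insert_of_notMem (by simp [h23, h24]),
        Finset.card_insert_of_notMem (by simp [h34]), Finset.card_singleton]
  calc 4 = ({x1, x2, x3, x4} : Finset (Fin k)).card := hcard.symm
    _ ≤ (Finset.univ : Finset (Fin k)).card := Finset.card_le_univ _
    _ = k := by simp

lemma lb_of_adj {F : SimpleGraph V} {k : ℕ} {c : VIElem F → Fin k}
    (hc : IsVIColoring F c) {u v : V} (h : F.Adj u v) : 4 ≤ k := by
  have he : s(u, v) ∈ F.edgeSet := h
  have hu : u ∈ s(u, v) := Sym2.mem_mk_left u v
  have hv : v ∈ s(u, v) := Sym2.mem_mk_right u v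
  set iu : Inc F := ⟨(u, s(u, v)), he, hu⟩ with hiu
  set iv : Inc F := ⟨(v, s(u, v)), he, hv⟩ with hiv
  have hne : iu ≠ iv := fun hh => h.ne (congrArg (fun i => i.1.1) hh)
  exact four_le_of_ne (c (Sum.inl u)) (c (Sum.inl v)) (c (Sum.inr iu)) (c (Sum.inr iv))
    (hc _ _ h)
    (hc (Sum.inl u) (Sum.inr iu) hu)
    (hc (Sum.inl u) (Sum.inr iv) hu)
    (hc (Sum.inl v) (Sum.inr iu) hv)
    (hc (Sum.inl v) (Sum.inr iv) hv)
    (hc (Sum.inr iu) (Sum.inr iv) ⟨hne, Or.inr (Or.inl rfl)⟩)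

lemma lb_of_deg [Fintype V] [DecidableEq V] {F : SimpleGraph V} {k : ℕ}
    {c : VIElem F → Fin k} (hc : IsVIColoring F c) (v : V)
    (hd : (F.neighborSet v).ncard ≠ 0) : (F.neighborSet v).ncard + 2 ≤ k := by
  classical
  set NF := (F.neighborSet v).toFinite.toFinset with hNF
  have hNcard : NF.card = (F.neighborSet v).ncard := (Set.ncard_eq_toFinset_card _ _).symm
  have hmem : ∀ x ∈ NF, F.Adj v x := by
    intro x hx
    rw [hNF, Set.Finite.mem_toFinset] at hx
    exact hx
  obtain ⟨u₀, hu₀⟩ : NF.Nonempty := Finset.card_pos.mp (by omega)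
  have hadj₀ : F.Adj v u₀ := hmem _ hu₀
  have hinc : ∀ x ∈ NF, s(v, x) ∈ F.edgeSet := fun x hx => hmem x hx
  set G : {x // x ∈ NF} → Fin k :=
    fun x => c (Sum.inr ⟨(v, s(v, x.1)), hinc x.1 x.2, Sym2.mem_mk_left _ _⟩) with hG
  have hGinj : Function.Injective G := by
    intro x y hxy
    by_contra hne
    have hxyv : (x : V) ≠ y := fun h => hne (Subtype.ext h)
    refine hc (Sum.inr ⟨(v, s(v, x.1)), hinc x.1 x.2, Sym2.mem_mk_left _ _⟩)
      (Sum.inr ⟨(v, s(v, y.1)), hinc y.1 y.2, Sym2.mem_mk_left _ _⟩) ?_ hxy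
    exact ⟨fun hh => hxyv (Sym2.congr_right.mp (congrArg (fun i => i.1.2) hh)), Or.inl rfl⟩
  set T := NF.attach.image G with hT
  have hTcard : T.card = NF.card := by
    rw [hT, Finset.card_image_of_injective _ hGinj, Finset.card_attach]
  set i₀ : Inc F := ⟨(u₀, s(u₀, v)), (hadj₀.symm : F.Adj u₀ v), Sym2.mem_mk_left _ _⟩ with hi₀
  have h1 : c (Sum.inr i₀) ∉ T := by
    rw [hT]
    simp only [Finset.mem_image]
    rintro ⟨x, -, hx⟩
    refine hc (Sum.inr i₀) (Sum.inr ⟨(v, s(v, x.1)), hinc x.1 x.2, Sym2.mem_mk_left _ _⟩)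
      ?_ hx.symm
    exact ⟨fun hh => hadj₀.ne' (congrArg (fun i => i.1.1) hh), Or.inr (Or.inr (Or.inl rfl))⟩
  have h2 : c (Sum.inl v) ∉ insert (c (Sum.inr i₀)) T := by
    simp only [Finset.mem_insert, hT, Finset.mem_image, not_or]
    constructor
    · exact hc (Sum.inl v) (Sum.inr i₀) (Sym2.mem_mk_right _ _)
    · rintro ⟨x, -, hx⟩
      exact hc (Sum.inl v) (Sum.inr ⟨(v, s(v, x.1)), hinc x.1 x.2, Sym2.mem_mk_left _ _⟩)
        (Sym2.mem_mk_left _ _) hx.symm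
  have hcard : (insert (c (Sum.inl v)) (insert (c (Sum.inr i₀)) T)).card
      = (F.neighborSet v).ncard + 2 := by
    rw [Finset.card_insert_of_notMem h2, Finset.card_insert_of_notMem h1, hTcard, hNcard]
  calc (F.neighborSet v).ncard + 2
      = (insert (c (Sum.inl v)) (insert (c (Sum.inr i₀)) T)).card := hcard.symm
    _ ≤ (Finset.univ : Finset (Fin k)).card := Finset.card_le_univ _
    _ = k := by simp

end ChiVISAux


/-- Let `F` be a finite (nonempty) forest. Then `χ_{vi,1}(F) = 1` if
`Δ(F) = 0`, `χ_{vi,1}(F) = 4` if `Δ(F) = 1`, and `χ_{vi,1}(F) = Δ(F) + 2` if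
`Δ(F) ≥ 2`. -/
theorem chiVIS_one_forest {V : Type*} [Fintype V] [DecidableEq V] [Nonempty V]
    (F : SimpleGraph V) (hF : F.IsAcyclic) :
    (maxDeg F = 0 → chiVIS F 1 = 1) ∧
    (maxDeg F = 1 → chiVIS F 1 = 4) ∧
    (2 ≤ maxDeg F → chiVIS F 1 = maxDeg F + 2) := by
  classical
  have hchi : chiVIS F 1 = sInf {k | ∃ c : VIElem F → Fin k, IsVISColoring F 1 c} := rfl
  have hmaxdef : maxDeg F = Finset.univ.sup fun v => (F.neighborSet v).ncard := rfl
  have hdegle : ∀ v, (F.neighborSet v).ncard ≤ maxDeg F := by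
    intro v
    rw [hmaxdef]
    exact Finset.le_sup (f := fun v => (F.neighborSet v).ncard) (Finset.mem_univ v)
  have hsup : ∃ vm ∈ (Finset.univ : Finset V),
      (Finset.univ.sup fun v => (F.neighborSet v).ncard) = (F.neighborSet vm).ncard :=
    Finset.exists_mem_eq_sup (Finset.univ : Finset V) Finset.univ_nonempty
      (fun v => (F.neighborSet v).ncard)
  obtain ⟨vmax, -, hvmax⟩ := hsup
  rw [← hmaxdef] at hvmax
  refine ⟨?_, ?_, ?_⟩
  · -- Δ = 0
    intro h0
    have hno : ∀ u v : V, ¬ F.Adj u v := by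
      intro u v huv
      have h1 : 0 < (F.neighborSet u).ncard :=
        (Set.ncard_pos (Set.toFinite _)).mpr ⟨v, huv⟩
      have h2 := hdegle u
      omega
    have mem1 : 1 ∈ {k | ∃ c : VIElem F → Fin k, IsVISColoring F 1 c} :=
      ⟨viCol F (fun _ => 0) (fun _ => 0),
        isVIS_of_fa F _ _ (fun u v h => absurd h (hno u v)) (fun u v h => absurd h (hno u v))
          (fun u v w h _ _ => absurd h (hno u v)) (fun u v h => absurd h (hno u v))
          (fun u v h => absurd h (hno u v))⟩
    rw [hchi]
    refine le_antisymm (Nat.sInf_le mem1) (le_csInf ⟨1, mem1⟩ ?_)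
    rintro (_ | k) ⟨c, -⟩
    · exact (c (Sum.inl (Classical.arbitrary V))).elim0
    · omega
  · -- Δ = 1
    intro h1
    have hvd : (F.neighborSet vmax).ncard = 1 := by rw [← hvmax, h1]
    obtain ⟨w1, hw1⟩ : (F.neighborSet vmax).Nonempty := by
      rw [← Set.ncard_pos (Set.toFinite _)]
      omega
    have hedge : F.Adj vmax w1 := hw1
    have hdeg1 : ∀ u, (F.neighborSet u).ncard ≤ 1 := fun u => h1 ▸ hdegle u
    have huniq : ∀ u x y, F.Adj u x → F.Adj u y → x = y := by
      intro u x y hx hy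
      by_contra hxy
      have hss : ({x, y} : Set V) ⊆ F.neighborSet u := by
        intro z hz
        rcases hz with rfl | hz
        · exact hx
        · rw [Set.mem_singleton_iff] at hz
          subst hz
          exact hy
      have h2 := Set.ncard_le_ncard hss (Set.toFinite _)
      rw [Set.ncard_pair hxy] at h2
      have := hdeg1 u
      omega
    set ord : V → ℕ := fun x => ((Fintype.equivFin V) x : ℕ) with hord
    have hordinj : ∀ x y, ord x = ord y → x = y := by
      intro x y h
      exact (Fintype.equivFin V).injective (Fin.ext h)
    set cond : V → Prop := fun x => ∀ y, F.Adj x y → ord x < ord y with hcond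
    have hcond_iff : ∀ u x, F.Adj u x → (cond u ↔ ord u < ord x) := by
      intro u x h
      constructor
      · exact fun hcd => hcd x h
      · intro hlt y hy
        rwa [huniq u y x hy h]
    have hopp : ∀ u x, F.Adj u x → (cond u ↔ ¬ cond x) := by
      intro u x h
      rw [hcond_iff u x h, hcond_iff x u h.symm]
      constructor
      · intro hlt hlt'
        omega
      · intro hn
        rcases lt_trichotomy (ord u) (ord x) with h' | h' | h'
        · exact h'
        · exact absurd (hordinj _ _ h') h.ne
        · exact absurd h' hn
    set f : V → Fin 4 := fun x => if cond x then 2 else 3 with hf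
    set a : V → Fin 4 := fun x => if cond x then 0 else 1 with ha
    have hval_pos : ∀ z, cond z → a z = 0 ∧ f z = 2 := by
      intro z hz
      constructor
      · show (if cond z then (0 : Fin 4) else 1) = 0
        rw [if_pos hz]
      · show (if cond z then (2 : Fin 4) else 3) = 2
        rw [if_pos hz]
    have hval_neg : ∀ z, ¬ cond z → a z = 1 ∧ f z = 3 := by
      intro z hz
      constructor
      · show (if cond z then (0 : Fin 4) else 1) = 1
        rw [if_neg hz]
      · show (if cond z then (2 : Fin 4) else 3) = 3
        rw [if_neg hz]
    have mem4 : 4 ∈ {k | ∃ c : VIElem F → Fin k, IsVISColoring F 1 c} := by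
      refine ⟨viCol F f a, isVIS_of_fa F f a ?_ ?_ ?_ ?_ ?_⟩
      · intro u x h
        by_cases hcu : cond u
        · rw [(hval_pos u hcu).1, (hval_neg x ((hopp u x h).mp hcu)).1]
          decide
        · rw [(hval_neg u hcu).1, (hval_pos x ((hopp x u h.symm).mpr hcu)).1]
          decide
      · intro u x h
        by_cases hcu : cond u
        · rw [(hval_pos u hcu).2, (hval_neg x ((hopp u x h).mp hcu)).2]
          decide
        · rw [(hval_neg u hcu).2, (hval_pos x ((hopp x u h.symm).mpr hcu)).2]
          decide
      · intro u x y hx hy hxy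
        exact absurd (huniq u x y hx hy) hxy
      · intro u x h
        by_cases hcu : cond u
        · rw [(hval_pos u hcu).1, (hval_pos u hcu).2]
          decide
        · rw [(hval_neg u hcu).1, (hval_neg u hcu).2]
          decide
      · intro u x h
        by_cases hcu : cond u
        · rw [(hval_pos u hcu).1, (hval_neg x ((hopp u x h).mp hcu)).2]
          decide
        · rw [(hval_neg u hcu).1, (hval_pos x ((hopp x u h.symm).mpr hcu)).2]
          decide
    rw [hchi]
    refine le_antisymm (Nat.sInf_le mem4) (le_csInf ⟨4, mem4⟩ ?_)
    rintro k ⟨c, hc, -⟩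
    exact lb_of_adj hc hedge
  · -- Δ ≥ 2
    intro h2
    obtain ⟨f, a, c1, c2, c3, c4, c5⟩ := exists_fa h2 (F.edgeSet.ncard) F rfl hF hdegle
    have memD : maxDeg F + 2 ∈ {k | ∃ c : VIElem F → Fin k, IsVISColoring F 1 c} :=
      ⟨viCol F f a, isVIS_of_fa F f a c1 c2 c3 (fun u v h => c4 u) c5⟩
    rw [hchi]
    refine le_antisymm (Nat.sInf_le memD) (le_csInf ⟨_, memD⟩ ?_)
    rintro k ⟨c, hc, -⟩
    have hlb := lb_of_deg hc vmax (by omega)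
    omega
end

section
/- Let G be a finite simple graph with maximum degree Δ. (i) If G is outerplanar, then χ_{vi,2}(G) ≤ Δ + 4. (ii) If G is planar, then χ_{vi,5}(G) ≤ Δ + 10. -/
open SimpleGraph

variable {V : Type*}

namespace VIWork

open Sum Finset
open scoped Classical

variable [DecidableEq V] {G : SimpleGraph V}

/-- The incidence at `x` on the edge `xy`. -/
noncomputable def mkI {x y : V} (h : G.Adj x y) : Inc G :=
  ⟨(x, s(x, y)), G.mem_edgeSet.mpr h, Sym2.mem_mk_left x y⟩

lemma inc_adj (i : Inc G) : G.Adj i.1.1 (Sym2.Mem.other i.2.2) := by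
  have h1 := Sym2.other_spec i.2.2
  have h2 := i.2.1
  rw [← h1] at h2
  exact G.mem_edgeSet.mp h2

lemma inc_repr (i : Inc G) : ∃ (y : V) (h : G.Adj i.1.1 y), i = mkI h ∧ y ∈ i.1.2 := by
  refine ⟨Sym2.Mem.other i.2.2, inc_adj i, ?_, Sym2.other_mem i.2.2⟩
  apply Subtype.ext
  have h1 := Sym2.other_spec i.2.2
  show i.1 = (i.1.1, s(i.1.1, Sym2.Mem.other i.2.2))
  rw [h1]

/-- Support of a VI-element in a vertex set `S`. -/
def inS (S : Finset V) : VIElem G → Prop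
  | inl x => x ∈ S
  | inr i => ∀ y ∈ i.1.2, y ∈ S

lemma inS_mkI (S : Finset V) {x y : V} (h : G.Adj x y) :
    inS S (inr (mkI h)) ↔ x ∈ S ∧ y ∈ S := by
  constructor
  · intro hh
    exact ⟨hh x (Sym2.mem_mk_left x y), hh y (Sym2.mem_mk_right x y)⟩
  · rintro ⟨h1, h2⟩ z hz
    rcases Sym2.mem_iff.mp hz with rfl | rfl <;> assumption

/-- Properness of a coloring on the part supported in `S`. -/
def Proper {N : ℕ} (S : Finset V) (c : VIElem G → Fin N) : Prop :=
  ∀ a b, VIAdj G a b → inS S a → inS S b → c a ≠ c b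

lemma VIAdj_symm {a b : VIElem G} (h : VIAdj G a b) : VIAdj G b a := by
  cases a <;> cases b <;> simp only [VIAdj] at h ⊢
  · exact h.symm
  · exact h
  · exact h
  · obtain ⟨h1, h2⟩ := h
    refine ⟨Ne.symm h1, ?_⟩
    rcases h2 with h | h | h | h
    · exact Or.inl h.symm
    · exact Or.inr (Or.inl h.symm)
    · exact Or.inr (Or.inr (Or.inr (by rwa [Sym2.eq_swap] at h)))
    · exact Or.inr (Or.inr (Or.inl (by rwa [Sym2.eq_swap] at h)))

lemma pick_color {N : ℕ} (F : Finset (Fin N)) (h : F.card < N) : ∃ x : Fin N, x ∉ F := by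
  have : (Finset.univ \ F).Nonempty := by
    rw [← Finset.card_pos, Finset.card_sdiff_of_subset (Finset.subset_univ F), Finset.card_univ,
      Fintype.card_fin]
    omega
  obtain ⟨x, hx⟩ := this
  exact ⟨x, (Finset.mem_sdiff.mp hx).2⟩

/-- The extended coloring. -/
noncomputable def extC {N : ℕ} (v : V) (c : VIElem G → Fin N) (p : Fin N)
    (β γ : V → Fin N) : VIElem G → Fin N
  | inl x => if x = v then p else c (inl x)
  | inr i => if h : v ∈ i.1.2 then
      (if i.1.1 = v then β (Sym2.Mem.other h) else γ i.1.1) else c (inr i)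

variable {N : ℕ} {v : V} {c : VIElem G → Fin N} {p : Fin N} {β γ : V → Fin N}

lemma extC_inl_v : extC v c p β γ (inl v) = p := by simp [extC]

lemma extC_inl {x : V} (h : x ≠ v) : extC v c p β γ (inl x) = c (inl x) := by
  simp [extC, h]

lemma extC_old {i : Inc G} (h : v ∉ i.1.2) : extC v c p β γ (inr i) = c (inr i) := by
  simp [extC, h]

lemma extC_beta {w : V} (h : G.Adj v w) : extC v c p β γ (inr (mkI h)) = β w := by
  have hv : v ∈ (mkI h).1.2 := Sym2.mem_mk_left v w
  simp only [extC, dif_pos hv]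
  rw [if_pos (show (mkI h : Inc G).1.1 = v from rfl)]
  congr 1
  have := Sym2.other_spec hv
  exact Sym2.congr_right.mp this

lemma extC_gamma {w : V} (h : G.Adj v w) : extC v c p β γ (inr (mkI h.symm)) = γ w := by
  have hv : v ∈ (mkI h.symm).1.2 := Sym2.mem_mk_right w v
  simp only [extC, dif_pos hv]
  rw [if_neg (show ¬((mkI h.symm : Inc G).1.1 = v) from G.ne_of_adj h.symm)]
  rfl

lemma elem_cases {S : Finset V} (hv : v ∉ S) (a : VIElem G)
    (ha : inS (insert v S) a) :
    a = inl v ∨ (∃ x ∈ S, a = inl x) ∨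
    (∃ i : Inc G, inS S (inr i) ∧ a = inr i) ∨
    (∃ w, ∃ h : G.Adj v w, w ∈ S ∧ a = inr (mkI h)) ∨
    (∃ w, ∃ h : G.Adj v w, w ∈ S ∧ a = inr (mkI h.symm)) := by
  cases a with
  | inl x =>
    have hx : x ∈ insert v S := ha
    rcases Finset.mem_insert.mp hx with rfl | hxS
    · exact Or.inl rfl
    · exact Or.inr (Or.inl ⟨x, hxS, rfl⟩)
  | inr i =>
    have ha' : ∀ y ∈ i.1.2, y ∈ insert v S := ha
    by_cases hve : v ∈ i.1.2
    · set z := Sym2.Mem.other hve with hz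
      have hspec : s(v, z) = i.1.2 := Sym2.other_spec hve
      have hadj : G.Adj v z := by
        have := i.2.1; rw [← hspec] at this; exact G.mem_edgeSet.mp this
      have hzS : z ∈ S := by
        have hzm : z ∈ i.1.2 := Sym2.other_mem hve
        rcases Finset.mem_insert.mp (ha' z hzm) with he | hS
        · exact absurd he.symm (G.ne_of_adj hadj)
        · exact hS
      have hx2 : i.1.1 ∈ i.1.2 := i.2.2
      rw [← hspec] at hx2
      rcases Sym2.mem_iff.mp hx2 with h1 | h1
      · refine Or.inr (Or.inr (Or.inr (Or.inl ⟨z, hadj, hzS, ?_⟩)))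
        congr 1
        apply Subtype.ext
        show i.1 = (v, s(v, z))
        rw [hspec]
        exact Prod.ext h1 rfl
      · refine Or.inr (Or.inr (Or.inr (Or.inr ⟨z, hadj, hzS, ?_⟩)))
        congr 1
        apply Subtype.ext
        show i.1 = (z, s(z, v))
        have : s(z, v) = (i.1).2 := by rw [Sym2.eq_swap]; exact hspec
        rw [this]
        exact Prod.ext h1 rfl
    · refine Or.inr (Or.inr (Or.inl ⟨i, ?_, rfl⟩))
      intro y hy
      rcases Finset.mem_insert.mp (ha' y hy) with rfl | hS
      · exact absurd hy hve
      · exact hS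

theorem extend_proper {S : Finset V} (hv : v ∉ S)
    (hc : Proper S c)
    (hβinj : ∀ w w', G.Adj v w → w ∈ S → G.Adj v w' → w' ∈ S → w ≠ w' → β w ≠ β w')
    (hβp : ∀ w, G.Adj v w → w ∈ S → β w ≠ p)
    (hγp : ∀ w, G.Adj v w → w ∈ S → γ w ≠ p)
    (hγβ : ∀ w w', G.Adj v w → w ∈ S → G.Adj v w' → w' ∈ S → γ w ≠ β w')
    (hβv : ∀ w, G.Adj v w → w ∈ S → β w ≠ c (inl w))
    (hγv : ∀ w, G.Adj v w → w ∈ S → γ w ≠ c (inl w))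
    (hβI1 : ∀ w, G.Adj v w → w ∈ S →
      ∀ i : Inc G, inS S (inr i) → i.1.1 = w → β w ≠ c (inr i))
    (hγI1 : ∀ w, G.Adj v w → w ∈ S →
      ∀ i : Inc G, inS S (inr i) → i.1.1 = w → γ w ≠ c (inr i))
    (hγI2 : ∀ w, G.Adj v w → w ∈ S →
      ∀ i : Inc G, inS S (inr i) → w ∈ i.1.2 → i.1.1 ≠ w → γ w ≠ c (inr i))
    (hp : ∀ w, G.Adj v w → w ∈ S → p ≠ c (inl w)) :
    Proper (insert v S) (extC v c p β γ) := by
  have hvnotin : ∀ (i : Inc G), inS S (inr i) → v ∉ i.1.2 := fun i h hm => hv (h v hm)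
  have hfstS : ∀ (i : Inc G), inS S (inr i) → i.1.1 ∈ S := fun i h => h _ i.2.2
  have hneS : ∀ x, x ∈ S → x ≠ v := fun x hx he => hv (he ▸ hx)
  have coreIB : ∀ (i : Inc G), inS S (inr i) → ∀ w (h : G.Adj v w), w ∈ S →
      VIAdj G (inr i) (inr (mkI h)) → c (inr i) ≠ β w := by
    intro i hiS w h hwS hadj
    obtain ⟨hne, hd⟩ := hadj
    have hd' : i.1.1 = v ∨ i.1.2 = s(v, w) ∨ s(i.1.1, v) = i.1.2 ∨ s(i.1.1, v) = s(v, w) := hd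
    rcases hd' with h1 | h2 | h3 | h4
    · exact absurd (h1 ▸ hfstS i hiS) hv
    · exact absurd (h2 ▸ Sym2.mem_mk_left v w) (hvnotin i hiS)
    · exact absurd (h3 ▸ Sym2.mem_mk_right i.1.1 v) (hvnotin i hiS)
    · rcases Sym2.eq_iff.mp h4 with ⟨h5, _⟩ | ⟨h5, _⟩
      · exact absurd (h5 ▸ hfstS i hiS) hv
      · exact (hβI1 w h hwS i hiS h5).symm
  have coreIC : ∀ (i : Inc G), inS S (inr i) → ∀ w (h : G.Adj v w), w ∈ S →
      VIAdj G (inr i) (inr (mkI h.symm)) → c (inr i) ≠ γ w := by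
    intro i hiS w h hwS hadj
    obtain ⟨hne, hd⟩ := hadj
    have hd' : i.1.1 = w ∨ i.1.2 = s(w, v) ∨ s(i.1.1, w) = i.1.2 ∨ s(i.1.1, w) = s(w, v) := hd
    rcases hd' with h1 | h2 | h3 | h4
    · exact (hγI1 w h hwS i hiS h1).symm
    · exact absurd (h2 ▸ Sym2.mem_mk_right w v) (hvnotin i hiS)
    · by_cases hiw : i.1.1 = w
      · exact (hγI1 w h hwS i hiS hiw).symm
      · exact (hγI2 w h hwS i hiS (h3 ▸ Sym2.mem_mk_right i.1.1 w) hiw).symm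
    · rcases Sym2.eq_iff.mp h4 with ⟨h5, h6⟩ | ⟨h5, _⟩
      · exact absurd h6 (G.ne_of_adj h).symm
      · exact absurd (h5 ▸ hfstS i hiS) hv
  have coreCC : ∀ w w' (h : G.Adj v w) (h' : G.Adj v w'),
      VIAdj G (inr (mkI h.symm)) (inr (mkI h'.symm)) → False := by
    intro w w' h h' hadj
    obtain ⟨hne, hd⟩ := hadj
    have hww : w ≠ w' := by
      intro he; subst he; exact hne (Subtype.ext rfl)
    have hd' : w = w' ∨ s(w, v) = s(w', v) ∨ s(w, w') = s(w, v) ∨ s(w, w') = s(w', v) := hd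
    rcases hd' with h1 | h2 | h3 | h4
    · exact hww h1
    · rcases Sym2.eq_iff.mp h2 with ⟨h5, _⟩ | ⟨h5, h6⟩
      · exact hww h5
      · exact (G.ne_of_adj h) h5.symm
    · exact (G.ne_of_adj h') (Sym2.congr_right.mp h3).symm
    · rcases Sym2.eq_iff.mp h4 with ⟨h5, h6⟩ | ⟨h5, _⟩
      · exact (G.ne_of_adj h') h6.symm
      · exact (G.ne_of_adj h) h5.symm
  intro a b hadj ha hb
  rcases elem_cases hv a ha with rfl | ⟨x, hxS, rfl⟩ | ⟨i, hiS, rfl⟩ |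
      ⟨w, h, hwS, rfl⟩ | ⟨w, h, hwS, rfl⟩ <;>
    rcases elem_cases hv b hb with rfl | ⟨y, hyS, rfl⟩ | ⟨j, hjS, rfl⟩ |
      ⟨w', h', hw'S, rfl⟩ | ⟨w', h', hw'S, rfl⟩
  · exact absurd (show G.Adj v v from hadj) (G.irrefl)
  · rw [extC_inl_v, extC_inl (hneS y hyS)]
    exact hp y (show G.Adj v y from hadj) hyS
  · exact absurd (show v ∈ j.1.2 from hadj) (hvnotin j hjS)
  · rw [extC_inl_v, extC_beta h']
    exact (hβp w' h' hw'S).symm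
  · rw [extC_inl_v, extC_gamma h']
    exact (hγp w' h' hw'S).symm
  · rw [extC_inl (hneS x hxS), extC_inl_v]
    exact (hp x (VIAdj_symm hadj) hxS).symm
  · rw [extC_inl (hneS x hxS), extC_inl (hneS y hyS)]
    exact hc _ _ hadj hxS hyS
  · rw [extC_inl (hneS x hxS), extC_old (hvnotin j hjS)]
    exact hc _ _ hadj hxS hjS
  · rw [extC_inl (hneS x hxS), extC_beta h']
    have hx : x ∈ s(v, w') := hadj
    rcases Sym2.mem_iff.mp hx with rfl | rfl
    · exact absurd hxS hv
    · exact (hβv x h' hxS).symm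
  · rw [extC_inl (hneS x hxS), extC_gamma h']
    have hx : x ∈ s(w', v) := hadj
    rcases Sym2.mem_iff.mp hx with rfl | rfl
    · exact (hγv x h' hxS).symm
    · exact absurd hxS hv
  · exact absurd (show v ∈ i.1.2 from hadj) (hvnotin i hiS)
  · rw [extC_old (hvnotin i hiS), extC_inl (hneS y hyS)]
    exact hc _ _ hadj hiS hyS
  · rw [extC_old (hvnotin i hiS), extC_old (hvnotin j hjS)]
    exact hc _ _ hadj hiS hjS
  · rw [extC_old (hvnotin i hiS), extC_beta h']
    exact coreIB i hiS w' h' hw'S hadj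
  · rw [extC_old (hvnotin i hiS), extC_gamma h']
    exact coreIC i hiS w' h' hw'S hadj
  · rw [extC_beta h, extC_inl_v]
    exact hβp w h hwS
  · rw [extC_beta h, extC_inl (hneS y hyS)]
    have hy : y ∈ s(v, w) := VIAdj_symm hadj
    rcases Sym2.mem_iff.mp hy with rfl | rfl
    · exact absurd hyS hv
    · exact hβv y h hyS
  · rw [extC_beta h, extC_old (hvnotin j hjS)]
    exact (coreIB j hjS w h hwS (VIAdj_symm hadj)).symm
  · rw [extC_beta h, extC_beta h']
    have hww : w ≠ w' := by
      intro he; subst he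
      obtain ⟨hne, _⟩ := hadj
      exact hne (Subtype.ext rfl)
    exact hβinj w w' h hwS h' hw'S hww
  · rw [extC_beta h, extC_gamma h']
    exact (hγβ w' w h' hw'S h hwS).symm
  · rw [extC_gamma h, extC_inl_v]
    exact hγp w h hwS
  · rw [extC_gamma h, extC_inl (hneS y hyS)]
    have hy : y ∈ s(w, v) := VIAdj_symm hadj
    rcases Sym2.mem_iff.mp hy with rfl | rfl
    · exact hγv y h hyS
    · exact absurd hyS hv
  · rw [extC_gamma h, extC_old (hvnotin j hjS)]
    exact (coreIC j hjS w h hwS (VIAdj_symm hadj)).symm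
  · rw [extC_gamma h, extC_beta h']
    exact hγβ w w' h hwS h' hw'S
  · exact absurd hadj (coreCC w w' h h')

end VIWork

namespace VIWork

open Sum Finset
open scoped Classical

variable [DecidableEq V] {G : SimpleGraph V}

lemma greedy_choice {N : ℕ} (hN : 0 < N) (P : V → Finset (Fin N)) :
    ∀ (l : List V), l.Nodup → ∀ (Q : V → Finset (Fin N)),
    (∀ w ∈ l, l.length ≤ (Q w).card) →
    ∃ β : V → Fin N,
      (∀ w ∈ l, β w ∈ Q w) ∧
      (∀ w ∈ l, ∀ w' ∈ l, w ≠ w' → β w ≠ β w') ∧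
      (∀ w ∈ l, β w ∈ P w ∨ ∀ x ∈ P w ∩ Q w, ∃ w' ∈ l, w' ≠ w ∧ β w' = x) := by
  intro l
  induction l with
  | nil =>
    intro _ Q _
    exact ⟨fun _ => ⟨0, hN⟩, by simp, by simp, by simp⟩
  | cons w l ih =>
    intro hnd Q hQ
    have hwl : w ∉ l := (List.nodup_cons.mp hnd).1
    have hnd' : l.Nodup := (List.nodup_cons.mp hnd).2
    have hQw : 1 ≤ (Q w).card := le_trans (by simp) (hQ w (List.mem_cons_self))
    have hbex : ∃ b : Fin N, b ∈ Q w ∧ ((P w ∩ Q w).Nonempty → b ∈ P w) := by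
      by_cases hpref : (P w ∩ Q w).Nonempty
      · obtain ⟨b, hb⟩ := hpref
        exact ⟨b, (Finset.mem_inter.mp hb).2, fun _ => (Finset.mem_inter.mp hb).1⟩
      · obtain ⟨b, hb⟩ := Finset.card_pos.mp (lt_of_lt_of_le Nat.zero_lt_one hQw)
        exact ⟨b, hb, fun h => absurd h hpref⟩
    obtain ⟨b, hbQ, hbP⟩ := hbex
    obtain ⟨β', hm, hinj, hdich⟩ := ih hnd' (fun u => Q u \ {b}) (by
      intro u hu
      have h1 := hQ u (List.mem_cons_of_mem w hu)
      have h2 : (Q u).card - 1 ≤ (Q u \ {b}).card := by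
        have h3 : (Q u).card - ({b} : Finset (Fin N)).card ≤ (Q u \ {b}).card :=
          Finset.le_card_sdiff _ _
        simpa using h3
      simp only [List.length_cons] at h1
      show l.length ≤ (Q u \ {b}).card
      omega)
    refine ⟨Function.update β' w b, ?_, ?_, ?_⟩
    · intro u hu
      rcases List.mem_cons.mp hu with rfl | hu'
      · simpa using hbQ
      · have hne : u ≠ w := fun he => hwl (he ▸ hu')
        rw [Function.update_of_ne hne]
        exact Finset.sdiff_subset (hm u hu')
    · intro u hu u' hu' hne
      rcases List.mem_cons.mp hu with rfl | hu2 <;> rcases List.mem_cons.mp hu' with rfl | hu2'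
      · exact absurd rfl hne
      · have hne' : u' ≠ u := fun he => hwl (he ▸ hu2')
        rw [Function.update_self, Function.update_of_ne hne']
        intro he
        have := hm u' hu2'
        rw [← he] at this
        exact absurd (Finset.mem_sdiff.mp this).2 (by simp)
      · have hne' : u ≠ u' := fun he => hwl (he ▸ hu2)
        rw [Function.update_self, Function.update_of_ne hne']
        intro he
        have := hm u hu2
        rw [he] at this
        exact absurd (Finset.mem_sdiff.mp this).2 (by simp)
      · have h1 : u ≠ w := fun he => hwl (he ▸ hu2)
        have h2 : u' ≠ w := fun he => hwl (he ▸ hu2')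
        rw [Function.update_of_ne h1, Function.update_of_ne h2]
        exact hinj u hu2 u' hu2' hne
    · intro u hu
      rcases List.mem_cons.mp hu with rfl | hu2
      · by_cases hpref : (P u ∩ Q u).Nonempty
        · left; rw [Function.update_self]; exact hbP hpref
        · right
          intro x hx
          exact absurd ⟨x, hx⟩ hpref
      · have h1 : u ≠ w := fun he => hwl (he ▸ hu2)
        rw [Function.update_of_ne h1]
        rcases hdich u hu2 with hl | hr
        · exact Or.inl hl
        · right
          intro x hx
          obtain ⟨hxP, hxQ⟩ := Finset.mem_inter.mp hx
          by_cases hxb : x = b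
          · exact ⟨w, List.mem_cons_self, fun he => hwl (he ▸ hu2), by
              rw [Function.update_self, hxb]⟩
          · obtain ⟨w', hw'l, hw'ne, hw'x⟩ := hr x (by
              rw [Finset.mem_inter]
              exact ⟨hxP, Finset.mem_sdiff.mpr ⟨hxQ, by simpa using hxb⟩⟩)
            have h2 : w' ≠ w := fun he => hwl (he ▸ hw'l)
            exact ⟨w', List.mem_cons_of_mem w hw'l, hw'ne, by
              rw [Function.update_of_ne h2]; exact hw'x⟩

variable {N : ℕ}

/-- helper: color of the incidence at `w` on edge `wy` (junk value if not adjacent) -/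
noncomputable def inc1 (c : VIElem G → Fin N) (w y : V) : Fin N :=
  if h : G.Adj w y then c (inr (mkI h)) else c (inl w)

lemma inc1_eq (c : VIElem G → Fin N) {w y : V} (h : G.Adj w y) :
    inc1 c w y = c (inr (mkI h)) := dif_pos h

/-- colors used by first incidences at `w` supported in `S` -/
noncomputable def colA (c : VIElem G → Fin N) (S : Finset V) (w : V) : Finset (Fin N) :=
  (S.filter (fun y => G.Adj w y)).image (fun y => inc1 c w y)

/-- colors used by second incidences of `w` (i.e. `I₂(w)`) supported in `S` -/
noncomputable def colB (c : VIElem G → Fin N) (S : Finset V) (w : V) : Finset (Fin N) :=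
  (S.filter (fun y => G.Adj w y)).image (fun y => inc1 c y w)

lemma mem_colA {c : VIElem G → Fin N} {S : Finset V} {w : V} {i : Inc G}
    (hiS : inS S (inr i)) (hfst : i.1.1 = w) : c (inr i) ∈ colA c S w := by
  obtain ⟨y, h, hrepr, hy⟩ := inc_repr i
  subst hfst
  refine Finset.mem_image.mpr ⟨y, ?_, ?_⟩
  · exact Finset.mem_filter.mpr ⟨hiS y hy, h⟩
  · rw [inc1_eq c h, ← hrepr]

lemma mem_colB {c : VIElem G → Fin N} {S : Finset V} {w : V} {i : Inc G}
    (hiS : inS S (inr i)) (hw : w ∈ i.1.2) (hfst : i.1.1 ≠ w) : c (inr i) ∈ colB c S w := by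
  have he : i.1.2 = s(i.1.1, w) := ((Sym2.mem_and_mem_iff hfst).mp ⟨i.2.2, hw⟩)
  have hadj : G.Adj i.1.1 w := by
    have := i.2.1; rw [he] at this; exact G.mem_edgeSet.mp this
  have hadj' : G.Adj w i.1.1 := hadj.symm
  refine Finset.mem_image.mpr ⟨i.1.1, ?_, ?_⟩
  · exact Finset.mem_filter.mpr ⟨hiS _ i.2.2, hadj'⟩
  · rw [inc1_eq c hadj]
    exact congrArg (fun j => c (inr j)) (Subtype.ext (show (mkI hadj : Inc G).1 = i.1 from
      (show i.1 = (i.1.1, s(i.1.1, w)) from Prod.ext rfl he).symm))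

lemma colA_card_le [Fintype V] {c : VIElem G → Fin N} {S : Finset V} {w : V} :
    (colA c S w).card ≤ (S.filter (fun y => G.Adj w y)).card := Finset.card_image_le

lemma colB_card_le [Fintype V] {c : VIElem G → Fin N} {S : Finset V} {w : V} :
    (colB c S w).card ≤ (S.filter (fun y => G.Adj w y)).card := Finset.card_image_le

lemma filter_card_lt [Fintype V] [DecidableEq V] {S : Finset V} {w : V} (hvw : G.Adj w v)
    (hv : v ∉ S) : (S.filter (fun y => G.Adj w y)).card < (G.neighborFinset w).card := by
  apply Finset.card_lt_card
  constructor
  · intro y hy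
    rw [SimpleGraph.mem_neighborFinset]
    exact (Finset.mem_filter.mp hy).2
  · intro hsub
    have hvmem : v ∈ G.neighborFinset w := (G.mem_neighborFinset w v).mpr hvw
    have := hsub hvmem
    exact hv (Finset.mem_filter.mp this).1

end VIWork

namespace VIWork

open Sum Finset
open scoped Classical

variable [DecidableEq V] [Fintype V] {G : SimpleGraph V}

theorem scheme1 {k Δ : ℕ} (hk : 2 ≤ k) (hΔk : Δ ≠ k)
    (hdeg : Degenerate k G) (hΔ : ∀ x : V, (G.neighborFinset x).card ≤ Δ)
    (S : Finset V) :
    ∃ (c : VIElem G → Fin (Δ + 2 * k)) (A : V → Finset (Fin (Δ + 2 * k))),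
      Proper S c ∧ ∀ x ∈ S,
        (A x).card = k ∧
        (∀ i : Inc G, inS S (inr i) → x ∈ i.1.2 → i.1.1 ≠ x → c (inr i) ∈ A x) ∧
        (∀ i : Inc G, inS S (inr i) → i.1.1 = x → c (inr i) ∉ A x) ∧
        c (inl x) ∉ A x := by
  have hN : 0 < Δ + 2 * k := by omega
  induction S using Finset.strongInduction with
  | _ S ih =>
  rcases Finset.eq_empty_or_nonempty S with rfl | hSne
  · refine ⟨fun _ => ⟨0, hN⟩, fun _ => ∅, ?_, by simp⟩
    intro a b _ ha _
    exfalso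
    cases a with
    | inl x => exact (Finset.notMem_empty x) ha
    | inr i => exact (Finset.notMem_empty i.1.1) (ha _ i.2.2)
  · -- pick a vertex of small back-degree
    obtain ⟨v, hvS, hvdeg⟩ := hdeg ↑S (Finset.coe_nonempty.mpr hSne)
    have hvS : v ∈ S := hvS
    have hdegF : (G.neighborFinset v ∩ S).card ≤ k := by
      have hset : (G.neighborSet v ∩ ↑S : Set V) = ↑(G.neighborFinset v ∩ S) := by
        ext y; simp
      rw [hset, Set.ncard_coe_finset] at hvdeg
      exact hvdeg
    set S' := S.erase v with hS'def
    have hS : S = insert v S' := (Finset.insert_erase hvS).symm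
    have hvS' : v ∉ S' := Finset.notMem_erase v S
    obtain ⟨c, A, hP, hinv⟩ := ih S' (Finset.erase_ssubset hvS)
    set W := G.neighborFinset v ∩ S' with hWdef
    have hWadj : ∀ w ∈ W, G.Adj v w :=
      fun w hw => (G.mem_neighborFinset v w).mp (Finset.mem_inter.mp hw).1
    have hWS' : ∀ w ∈ W, w ∈ S' := fun w hw => (Finset.mem_inter.mp hw).2
    have hWrev : ∀ w, G.Adj v w → w ∈ S' → w ∈ W := fun w h1 h2 =>
      Finset.mem_inter.mpr ⟨(G.mem_neighborFinset v w).mpr h1, h2⟩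
    have hWk : W.card ≤ k := by
      refine le_trans (Finset.card_le_card ?_) hdegF
      intro w hw
      exact Finset.mem_inter.mpr ⟨(Finset.mem_inter.mp hw).1,
        Finset.mem_of_mem_erase (Finset.mem_inter.mp hw).2⟩
    have hWΔ : W.card ≤ Δ := le_trans (Finset.card_le_card Finset.inter_subset_left) (hΔ v)
    -- invariant accessors
    have hA1 : ∀ w ∈ S', (A w).card = k := fun w hw => (hinv w hw).1
    have hA2 : ∀ w ∈ S', ∀ i : Inc G, inS S' (inr i) → w ∈ i.1.2 → i.1.1 ≠ w →
        c (inr i) ∈ A w := fun w hw => (hinv w hw).2.1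
    have hA3 : ∀ w ∈ S', ∀ i : Inc G, inS S' (inr i) → i.1.1 = w →
        c (inr i) ∉ A w := fun w hw => (hinv w hw).2.2.1
    have hA4 : ∀ w ∈ S', c (inl w) ∉ A w := fun w hw => (hinv w hw).2.2.2
    -- choose the β colors from the pools
    obtain ⟨β, hβQ, hβinj, -⟩ := greedy_choice hN (fun _ => (∅ : Finset (Fin (Δ + 2 * k))))
      W.toList W.nodup_toList (fun w => A w) (by
        intro w hwl
        rw [Finset.length_toList, hA1 w (hWS' w (Finset.mem_toList.mp hwl))]
        exact hWk)
    have hβA : ∀ w ∈ W, β w ∈ A w := fun w hw => hβQ w (Finset.mem_toList.mpr hw)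
    have hβinj' : ∀ w ∈ W, ∀ w' ∈ W, w ≠ w' → β w ≠ β w' := fun w hw w' hw' =>
      hβinj w (Finset.mem_toList.mpr hw) w' (Finset.mem_toList.mpr hw')
    set βset := W.image β with hβsetdef
    -- choose the γ colors
    have hγex : ∀ w : V, ∃ g : Fin (Δ + 2 * k), w ∈ W →
        g ∉ colA c S' w ∪ (βset ∪ A w) ∪ {c (inl w)} := by
      intro w
      by_cases hw : w ∈ W
      · have hcard : (colA c S' w ∪ (βset ∪ A w) ∪ {c (inl w)}).card < Δ + 2 * k := by
          have h1 : (colA c S' w).card < Δ := by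
            refine lt_of_le_of_lt colA_card_le (lt_of_lt_of_le ?_ (hΔ w))
            exact filter_card_lt ((hWadj w hw).symm) hvS'
          have h2 : (βset \ A w).card + 1 ≤ W.card := by
            have hsub : βset \ A w ⊆ βset.erase (β w) := by
              intro x hx
              obtain ⟨hx1, hx2⟩ := Finset.mem_sdiff.mp hx
              refine Finset.mem_erase.mpr ⟨?_, hx1⟩
              intro he
              exact hx2 (he ▸ hβA w hw)
            have h3 := Finset.card_le_card hsub
            have h4 : (βset.erase (β w)).card + 1 = βset.card :=
              Finset.card_erase_add_one (Finset.mem_image_of_mem β hw)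
            have h5 : βset.card ≤ W.card := Finset.card_image_le
            omega
          have h6 : (βset ∪ A w).card = (βset \ A w).card + (A w).card :=
            (Finset.card_sdiff_add_card βset (A w)).symm ▸ rfl
          have h6' : (βset ∪ A w).card ≤ (βset \ A w).card + k := by
            rw [← Finset.card_sdiff_add_card βset (A w), hA1 w (hWS' w hw)]
          have h7 := Finset.card_union_le (colA c S' w ∪ (βset ∪ A w)) ({c (inl w)} : Finset (Fin (Δ + 2 * k)))
          have h8 := Finset.card_union_le (colA c S' w) (βset ∪ A w)
          have h9 : ({c (inl w)} : Finset (Fin (Δ + 2 * k))).card = 1 := Finset.card_singleton _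
          have := hWk
          omega
        obtain ⟨g, hg⟩ := pick_color _ hcard
        exact ⟨g, fun _ => hg⟩
      · exact ⟨⟨0, hN⟩, fun h => absurd h hw⟩
    choose γ hγ using hγex
    have hγ1 : ∀ w ∈ W, γ w ∉ colA c S' w := by
      intro w hw h
      exact hγ w hw (Finset.mem_union_left _ (Finset.mem_union_left _ h))
    have hγ2 : ∀ w ∈ W, γ w ∉ βset := by
      intro w hw h
      exact hγ w hw (Finset.mem_union_left _ (Finset.mem_union_right _
        (Finset.mem_union_left _ h)))
    have hγ3 : ∀ w ∈ W, γ w ∉ A w := by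
      intro w hw h
      exact hγ w hw (Finset.mem_union_left _ (Finset.mem_union_right _
        (Finset.mem_union_right _ h)))
    have hγ4 : ∀ w ∈ W, γ w ≠ c (inl w) := by
      intro w hw h
      exact hγ w hw (Finset.mem_union_right _ (by simp [h]))
    set γimg := W.image γ with hγimgdef
    -- choose the vertex color p
    have hpex : ∃ p : Fin (Δ + 2 * k),
        p ∉ (W.image fun w => c (inl w)) ∪ βset ∪ γimg := by
      apply pick_color
      have h1 := Finset.card_union_le ((W.image fun w => c (inl w)) ∪ βset) γimg
      have h2 := Finset.card_union_le (W.image fun w => c (inl w)) βset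
      have h3 : (W.image fun w => c (inl w)).card ≤ W.card := Finset.card_image_le
      have h4 : βset.card ≤ W.card := Finset.card_image_le
      have h5 : γimg.card ≤ W.card := Finset.card_image_le
      omega
    obtain ⟨p, hp⟩ := hpex
    have hp1 : ∀ w ∈ W, p ≠ c (inl w) := by
      intro w hw h
      exact hp (Finset.mem_union_left _ (Finset.mem_union_left _
        (Finset.mem_image.mpr ⟨w, hw, h.symm⟩)))
    have hp2 : p ∉ βset := fun h =>
      hp (Finset.mem_union_left _ (Finset.mem_union_right _ h))
    have hp3 : p ∉ γimg := fun h => hp (Finset.mem_union_right _ h)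
    -- build the new pool for v
    have hsubcard : k - γimg.card ≤ (Finset.univ \ (βset ∪ {p} ∪ γimg)).card := by
      have h1 : (Finset.univ \ (βset ∪ {p} ∪ γimg)).card =
          (Δ + 2 * k) - (βset ∪ {p} ∪ γimg).card := by
        rw [Finset.card_sdiff_of_subset (Finset.subset_univ _), Finset.card_univ, Fintype.card_fin]
      have h2 := Finset.card_union_le (βset ∪ ({p} : Finset (Fin (Δ + 2 * k)))) γimg
      have h3 := Finset.card_union_le βset ({p} : Finset (Fin (Δ + 2 * k)))
      have h4 : βset.card ≤ W.card := Finset.card_image_le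
      have h5 : γimg.card ≤ W.card := Finset.card_image_le
      have h9 : ({p} : Finset (Fin (Δ + 2 * k))).card = 1 := Finset.card_singleton _
      have := hWΔ
      have := hWk
      omega
    obtain ⟨T, hTsub, hTcard⟩ := Finset.exists_subset_card_eq hsubcard
    have hTX : ∀ x ∈ T, x ∉ βset ∪ {p} ∪ γimg := by
      intro x hx
      exact (Finset.mem_sdiff.mp (hTsub hx)).2
    set Anew := γimg ∪ T with hAnewdef
    have hAnewcard : Anew.card = k := by
      have hdisj : Disjoint γimg T := by
        rw [Finset.disjoint_right]
        intro x hxT hxγ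
        exact hTX x hxT (Finset.mem_union_right _ hxγ)
      rw [hAnewdef, Finset.card_union_of_disjoint hdisj, hTcard]
      have h5 : γimg.card ≤ W.card := Finset.card_image_le
      have := hWk
      omega
    set A' := Function.update A v Anew with hA'def
    set c' := extC v c p β γ with hc'def
    -- properness
    have hP' : Proper S c' := by
      rw [hS]
      apply extend_proper hvS' hP
      · intro w w' h1 h2 h3 h4 h5
        exact hβinj' w (hWrev w h1 h2) w' (hWrev w' h3 h4) h5
      · intro w h1 h2 he
        exact hp2 (he ▸ Finset.mem_image_of_mem β (hWrev w h1 h2))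
      · intro w h1 h2 he
        exact hp3 (he ▸ Finset.mem_image_of_mem γ (hWrev w h1 h2))
      · intro w w' h1 h2 h3 h4 he
        exact hγ2 w (hWrev w h1 h2) (he ▸ Finset.mem_image_of_mem β (hWrev w' h3 h4))
      · intro w h1 h2 he
        exact hA4 w h2 (he ▸ hβA w (hWrev w h1 h2))
      · intro w h1 h2
        exact hγ4 w (hWrev w h1 h2)
      · intro w h1 h2 i hiS hfst he
        exact hA3 w h2 i hiS hfst (he ▸ hβA w (hWrev w h1 h2))
      · intro w h1 h2 i hiS hfst he
        exact hγ1 w (hWrev w h1 h2) (he ▸ mem_colA hiS hfst)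
      · intro w h1 h2 i hiS hmem hfst he
        exact hγ3 w (hWrev w h1 h2) (he ▸ hA2 w h2 i hiS hmem hfst)
      · intro w h1 h2
        exact hp1 w (hWrev w h1 h2)
    refine ⟨c', A', hP', ?_⟩
    -- the invariant
    intro x hxS
    by_cases hxv : x = v
    · subst hxv
      have hAx : A' x = Anew := Function.update_self x Anew A
      refine ⟨by rw [hAx, hAnewcard], ?_, ?_, ?_⟩
      · -- second incidences of v get colors in Anew
        intro i hiS hxi hfst
        rcases elem_cases hvS' (inr i) (by rw [← hS]; exact hiS) with h | ⟨z, hz, h⟩ |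
            ⟨j, hjS, h⟩ | ⟨w, hadj, hwS2, h⟩ | ⟨w, hadj, hwS2, h⟩
        · exact absurd h (by simp)
        · exact absurd h (by simp)
        · obtain rfl : i = j := Sum.inr_injective h
          exact absurd (hjS x hxi) hvS'
        · obtain rfl : i = mkI hadj := Sum.inr_injective h
          exact absurd rfl hfst
        · obtain rfl : i = mkI hadj.symm := Sum.inr_injective h
          rw [hAx, hc'def, extC_gamma hadj]
          exact Finset.mem_union_left _ (Finset.mem_image_of_mem γ (hWrev w hadj hwS2))
      · -- first incidences of v avoid Anew
        intro i hiS hfst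
        rcases elem_cases hvS' (inr i) (by rw [← hS]; exact hiS) with h | ⟨z, hz, h⟩ |
            ⟨j, hjS, h⟩ | ⟨w, hadj, hwS2, h⟩ | ⟨w, hadj, hwS2, h⟩
        · exact absurd h (by simp)
        · exact absurd h (by simp)
        · obtain rfl : i = j := Sum.inr_injective h
          exact absurd (hfst ▸ hjS _ i.2.2) hvS'
        · obtain rfl : i = mkI hadj := Sum.inr_injective h
          rw [hAx, hc'def, extC_beta hadj]
          intro hmem
          rcases Finset.mem_union.mp hmem with hm | hm
          · obtain ⟨w', hw', he⟩ := Finset.mem_image.mp hm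
            exact hγ2 w' hw' (he ▸ Finset.mem_image_of_mem β (hWrev w hadj hwS2))
          · exact hTX _ hm (Finset.mem_union_left _ (Finset.mem_union_left _
              (Finset.mem_image_of_mem β (hWrev w hadj hwS2))))
        · obtain rfl : i = mkI hadj.symm := Sum.inr_injective h
          have hwv : w = x := hfst
          exact absurd (hwv ▸ hwS2) hvS'
      · -- vertex color of v avoids Anew
        rw [hAx, hc'def, extC_inl_v]
        intro hmem
        rcases Finset.mem_union.mp hmem with hm | hm
        · exact hp3 hm
        · exact hTX _ hm (Finset.mem_union_left _ (Finset.mem_union_right _ (by simp)))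
    · -- x ∈ S', old vertex
      have hxS' : x ∈ S' := Finset.mem_erase.mpr ⟨hxv, hxS⟩
      have hAx : A' x = A x := Function.update_of_ne hxv Anew A
      refine ⟨by rw [hAx]; exact hA1 x hxS', ?_, ?_, ?_⟩
      · intro i hiS hxi hfst
        rcases elem_cases hvS' (inr i) (by rw [← hS]; exact hiS) with h | ⟨z, hz, h⟩ |
            ⟨j, hjS, h⟩ | ⟨w, hadj, hwS2, h⟩ | ⟨w, hadj, hwS2, h⟩
        · exact absurd h (by simp)
        · exact absurd h (by simp)
        · obtain rfl : i = j := Sum.inr_injective h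
          rw [hAx, hc'def, extC_old (fun hm => hvS' (hjS v hm))]
          exact hA2 x hxS' i hjS hxi hfst
        · obtain rfl : i = mkI hadj := Sum.inr_injective h
          have hxw : x = w := by
            rcases Sym2.mem_iff.mp (show x ∈ s(v, w) from hxi) with h1 | h1
            · exact absurd h1 hxv
            · exact h1
          subst hxw
          rw [hAx, hc'def, extC_beta hadj]
          exact hβA x (hWrev x hadj hwS2)
        · obtain rfl : i = mkI hadj.symm := Sum.inr_injective h
          have hxw : x = w := by
            rcases Sym2.mem_iff.mp (show x ∈ s(w, v) from hxi) with h1 | h1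
            · exact h1
            · exact absurd h1 hxv
          exact absurd hxw.symm hfst
      · intro i hiS hfst
        rcases elem_cases hvS' (inr i) (by rw [← hS]; exact hiS) with h | ⟨z, hz, h⟩ |
            ⟨j, hjS, h⟩ | ⟨w, hadj, hwS2, h⟩ | ⟨w, hadj, hwS2, h⟩
        · exact absurd h (by simp)
        · exact absurd h (by simp)
        · obtain rfl : i = j := Sum.inr_injective h
          rw [hAx, hc'def, extC_old (fun hm => hvS' (hjS v hm))]
          exact hA3 x hxS' i hjS hfst
        · obtain rfl : i = mkI hadj := Sum.inr_injective h
          exact absurd (show v = x from hfst) (fun he => hxv (he.symm))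
        · obtain rfl : i = mkI hadj.symm := Sum.inr_injective h
          have hwx : w = x := hfst
          subst hwx
          rw [hAx, hc'def, extC_gamma hadj]
          exact hγ3 w (hWrev w hadj hwS2)
      · rw [hAx, hc'def, extC_inl hxv]
        exact hA4 x hxS'

end VIWork

namespace VIWork

open Sum Finset
open scoped Classical

variable [DecidableEq V] [Fintype V] {G : SimpleGraph V}

theorem scheme2 {k : ℕ} (hk : 2 ≤ k) (hΔ : ∀ x : V, (G.neighborFinset x).card ≤ k)
    (S : Finset V) : ∃ c : VIElem G → Fin (3 * k), Proper S c := by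
  have hN : 0 < 3 * k := by omega
  induction S using Finset.strongInduction with
  | _ S ih =>
  rcases Finset.eq_empty_or_nonempty S with rfl | hSne
  · refine ⟨fun _ => ⟨0, hN⟩, ?_⟩
    intro a b _ ha _
    exfalso
    cases a with
    | inl x => exact (Finset.notMem_empty x) ha
    | inr i => exact (Finset.notMem_empty i.1.1) (ha _ i.2.2)
  · obtain ⟨v, hvS⟩ := hSne
    set S' := S.erase v with hS'def
    have hS : S = insert v S' := (Finset.insert_erase hvS).symm
    have hvS' : v ∉ S' := Finset.notMem_erase v S
    obtain ⟨c, hP⟩ := ih S' (Finset.erase_ssubset hvS)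
    set W := G.neighborFinset v ∩ S' with hWdef
    have hWadj : ∀ w ∈ W, G.Adj v w :=
      fun w hw => (G.mem_neighborFinset v w).mp (Finset.mem_inter.mp hw).1
    have hWS' : ∀ w ∈ W, w ∈ S' := fun w hw => (Finset.mem_inter.mp hw).2
    have hWrev : ∀ w, G.Adj v w → w ∈ S' → w ∈ W := fun w h1 h2 =>
      Finset.mem_inter.mpr ⟨(G.mem_neighborFinset v w).mpr h1, h2⟩
    have hWk : W.card ≤ k := le_trans (Finset.card_le_card Finset.inter_subset_left) (hΔ v)
    -- local degree bound
    have hfilt : ∀ w ∈ W, (S'.filter (fun y => G.Adj w y)).card + 1 ≤ k := by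
      intro w hw
      have h1 : (S'.filter (fun y => G.Adj w y)).card < (G.neighborFinset w).card :=
        filter_card_lt ((hWadj w hw).symm) hvS'
      have h2 := hΔ w
      omega
    -- choose the vertex color p first
    have hpex : ∃ p : Fin (3 * k), p ∉ W.image fun w => c (inl w) := by
      apply pick_color
      have h3 : (W.image fun w => c (inl w)).card ≤ W.card := Finset.card_image_le
      omega
    obtain ⟨p, hp⟩ := hpex
    have hp1 : ∀ w ∈ W, p ≠ c (inl w) := by
      intro w hw h
      exact hp (Finset.mem_image.mpr ⟨w, hw, h.symm⟩)
    -- hard forbidden sets for the β colors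
    set Fh : V → Finset (Fin (3 * k)) :=
      fun w => colA c S' w ∪ {c (inl w)} ∪ {p} with hFhdef
    have hFhcard : ∀ w ∈ W, (Fh w).card ≤ k + 1 := by
      intro w hw
      show (colA c S' w ∪ {c (inl w)} ∪ {p} : Finset (Fin (3 * k))).card ≤ k + 1
      have h1 := Finset.card_union_le (colA c S' w ∪ {c (inl w)}) ({p} : Finset (Fin (3 * k)))
      have h2 := Finset.card_union_le (colA c S' w) ({c (inl w)} : Finset (Fin (3 * k)))
      have h3 : (colA c S' w).card ≤ (S'.filter (fun y => G.Adj w y)).card :=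
        colA_card_le
      have h4 := hfilt w hw
      simp only [Finset.card_singleton] at h1 h2
      omega
    -- choose the β colors greedily, preferring already-used I₂ colors
    obtain ⟨β, hβQ, hβinjl, hdich⟩ := greedy_choice hN (fun w => colB c S' w)
      W.toList W.nodup_toList (fun w => Finset.univ \ Fh w) (by
        intro w hwl
        have hw := Finset.mem_toList.mp hwl
        rw [Finset.length_toList]
        rw [Finset.card_sdiff_of_subset (Finset.subset_univ _), Finset.card_univ, Fintype.card_fin]
        have := hFhcard w hw
        have := hWk
        omega)
    have hβinj' : ∀ w ∈ W, ∀ w' ∈ W, w ≠ w' → β w ≠ β w' := fun w hw w' hw' =>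
      hβinjl w (Finset.mem_toList.mpr hw) w' (Finset.mem_toList.mpr hw')
    have hβQ' : ∀ w ∈ W, β w ∉ Fh w := by
      intro w hw
      exact (Finset.mem_sdiff.mp (hβQ w (Finset.mem_toList.mpr hw))).2
    set βset := W.image β with hβsetdef
    have hβsetcard : βset.card ≤ k := le_trans Finset.card_image_le hWk
    -- choose the γ colors
    have hγex : ∀ w : V, ∃ g : Fin (3 * k), w ∈ W →
        g ∉ Fh w ∪ colB c S' w ∪ βset := by
      intro w
      by_cases hw : w ∈ W
      · have hcard : (Fh w ∪ colB c S' w ∪ βset).card < 3 * k := by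
          have hBle : (colB c S' w).card + 1 ≤ k := by
            have h3 : (colB c S' w).card ≤ (S'.filter (fun y => G.Adj w y)).card :=
              colB_card_le
            have h4 := hfilt w hw
            omega
          rcases hdich w (Finset.mem_toList.mpr hw) with hpref | hfail
          · -- β w is a reused I₂ color
            have hsub : Fh w ∪ colB c S' w ∪ βset ⊆
                Fh w ∪ ((colB c S' w).erase (β w) ∪ βset) := by
              intro x hx
              rcases Finset.mem_union.mp hx with hx1 | hx2
              · rcases Finset.mem_union.mp hx1 with hx3 | hx4
                · exact Finset.mem_union_left _ hx3
                · by_cases hxe : x = β w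
                  · subst hxe
                    exact Finset.mem_union_right _ (Finset.mem_union_right _
                      (Finset.mem_image_of_mem β hw))
                  · exact Finset.mem_union_right _ (Finset.mem_union_left _
                      (Finset.mem_erase.mpr ⟨hxe, hx4⟩))
              · exact Finset.mem_union_right _ (Finset.mem_union_right _ hx2)
            have h1 := Finset.card_le_card hsub
            have h2 := Finset.card_union_le (Fh w)
              ((colB c S' w).erase (β w) ∪ βset)
            have h3 := Finset.card_union_le ((colB c S' w).erase (β w)) βset
            have h4 : ((colB c S' w).erase (β w)).card + 1 = (colB c S' w).card :=
              Finset.card_erase_add_one hpref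
            have h5 := hFhcard w hw
            omega
          · -- the preferred colors were all blocked: colB ⊆ Fh ∪ βset
            have hsub : Fh w ∪ colB c S' w ∪ βset ⊆ Fh w ∪ βset := by
              intro x hx
              rcases Finset.mem_union.mp hx with hx1 | hx2
              · rcases Finset.mem_union.mp hx1 with hx3 | hx4
                · exact Finset.mem_union_left _ hx3
                · by_cases hxQ : x ∈ Finset.univ \ Fh w
                  · obtain ⟨w', hw'l, _, hw'e⟩ := hfail x (Finset.mem_inter.mpr ⟨hx4, hxQ⟩)
                    exact Finset.mem_union_right _ (hw'e ▸ Finset.mem_image_of_mem β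
                      (Finset.mem_toList.mp hw'l))
                  · have : x ∈ Fh w := by
                      by_contra hxF
                      exact hxQ (Finset.mem_sdiff.mpr ⟨Finset.mem_univ x, hxF⟩)
                    exact Finset.mem_union_left _ this
              · exact Finset.mem_union_right _ hx2
            have h1 := Finset.card_le_card hsub
            have h2 := Finset.card_union_le (Fh w) βset
            have h5 := hFhcard w hw
            omega
        obtain ⟨g, hg⟩ := pick_color _ hcard
        exact ⟨g, fun _ => hg⟩
      · exact ⟨⟨0, hN⟩, fun h => absurd h hw⟩
    choose γ hγ using hγex
    have hγFh : ∀ w ∈ W, γ w ∉ Fh w := by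
      intro w hw h
      exact hγ w hw (Finset.mem_union_left _ (Finset.mem_union_left _ h))
    have hγB : ∀ w ∈ W, γ w ∉ colB c S' w := by
      intro w hw h
      exact hγ w hw (Finset.mem_union_left _ (Finset.mem_union_right _ h))
    have hγβ' : ∀ w ∈ W, γ w ∉ βset := by
      intro w hw h
      exact hγ w hw (Finset.mem_union_right _ h)
    -- membership helpers for Fh
    have hFh1 : ∀ w, c (inl w) ∈ Fh w := fun w =>
      Finset.mem_union_left _ (Finset.mem_union_right _ (by simp))
    have hFh2 : ∀ w, p ∈ Fh w := fun w => Finset.mem_union_right _ (by simp)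
    have hFh3 : ∀ w, ∀ x ∈ colA c S' w, x ∈ Fh w := fun w x hx =>
      Finset.mem_union_left _ (Finset.mem_union_left _ hx)
    refine ⟨extC v c p β γ, ?_⟩
    rw [hS]
    apply extend_proper hvS' hP
    · intro w w' h1 h2 h3 h4 h5
      exact hβinj' w (hWrev w h1 h2) w' (hWrev w' h3 h4) h5
    · intro w h1 h2 he
      exact hβQ' w (hWrev w h1 h2) (he ▸ hFh2 w)
    · intro w h1 h2 he
      exact hγFh w (hWrev w h1 h2) (he ▸ hFh2 w)
    · intro w w' h1 h2 h3 h4 he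
      exact hγβ' w (hWrev w h1 h2) (he ▸ Finset.mem_image_of_mem β (hWrev w' h3 h4))
    · intro w h1 h2 he
      exact hβQ' w (hWrev w h1 h2) (he ▸ hFh1 w)
    · intro w h1 h2 he
      exact hγFh w (hWrev w h1 h2) (he ▸ hFh1 w)
    · intro w h1 h2 i hiS hfst he
      exact hβQ' w (hWrev w h1 h2) (he ▸ hFh3 w _ (mem_colA hiS hfst))
    · intro w h1 h2 i hiS hfst he
      exact hγFh w (hWrev w h1 h2) (he ▸ hFh3 w _ (mem_colA hiS hfst))
    · intro w h1 h2 i hiS hmem hfst he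
      exact hγB w (hWrev w h1 h2) (he ▸ mem_colB hiS hmem hfst)
    · intro w h1 h2
      exact hp1 w (hWrev w h1 h2)

end VIWork

namespace VIWork

open Sum Finset
open scoped Classical

variable [DecidableEq V] [Fintype V] {G : SimpleGraph V}

lemma degree_le_maxDeg (x : V) : (G.neighborFinset x).card ≤ maxDeg G := by
  have h1 : (G.neighborSet x).ncard = (G.neighborFinset x).card := by
    rw [← Set.ncard_coe_finset]
    congr 1
    ext y; simp
  rw [← h1]
  exact Finset.le_sup (f := fun v => (G.neighborSet v).ncard) (Finset.mem_univ x)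

lemma inS_univ (a : VIElem G) : inS Finset.univ a := by
  cases a with
  | inl x => exact Finset.mem_univ x
  | inr i => exact fun y _ => Finset.mem_univ y

lemma I2_ncard_le (x : V) : (I2 G x).ncard ≤ (G.neighborFinset x).card := by
  have h1 : (G.neighborSet x).ncard = (G.neighborFinset x).card := by
    rw [← Set.ncard_coe_finset]; congr 1; ext y; simp
  rw [← h1]
  apply Set.ncard_le_ncard_of_injOn (fun i => i.1.1)
  · intro i hi
    obtain ⟨hne, he⟩ := hi
    have : G.Adj i.1.1 x := by
      have h2 := i.2.1
      rw [he] at h2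
      exact G.mem_edgeSet.mp h2
    exact this.symm
  · intro i hi j hj hij
    have hij' : i.1.1 = j.1.1 := hij
    obtain ⟨_, hei⟩ := hi
    obtain ⟨_, hej⟩ := hj
    apply Subtype.ext
    have h2 : i.1.2 = j.1.2 := by rw [hei, hej, hij']
    exact Prod.ext hij' h2

theorem main_bound {k : ℕ} (hk : 2 ≤ k) (hdeg : Degenerate k G) :
    ∃ c : VIElem G → Fin (maxDeg G + 2 * k), IsVISColoring G k c := by
  set Δ := maxDeg G with hΔdef
  by_cases hcase : Δ = k
  · -- max degree equals k : use scheme2 with 3k colors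
    obtain ⟨c, hP⟩ := scheme2 (G := G) hk
      (fun x => hcase ▸ degree_le_maxDeg x) Finset.univ
    have hcast : 3 * k = Δ + 2 * k := by omega
    refine ⟨fun a => Fin.cast hcast (c a), ?_, ?_⟩
    · intro a b hadj he
      apply hP a b hadj (inS_univ a) (inS_univ b)
      exact Fin.val_injective (by simpa using congrArg Fin.val he)
    · intro x
      calc ((fun i => Fin.cast hcast (c (inr i))) '' I2 G x).ncard
          ≤ (I2 G x).ncard := Set.ncard_image_le (Set.toFinite _)
        _ ≤ (G.neighborFinset x).card := I2_ncard_le x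
        _ ≤ k := hcase ▸ degree_le_maxDeg x
  · -- max degree ≠ k : use scheme1
    obtain ⟨c, A, hP, hinv⟩ := scheme1 (G := G) hk hcase hdeg
      (fun x => degree_le_maxDeg x) Finset.univ
    refine ⟨c, ?_, ?_⟩
    · intro a b hadj
      exact hP a b hadj (inS_univ a) (inS_univ b)
    · intro x
      obtain ⟨hcard, hmem, -, -⟩ := hinv x (Finset.mem_univ x)
      have hsub : ((fun i => c (inr i)) '' I2 G x) ⊆ ↑(A x) := by
        rintro col ⟨i, hi, rfl⟩
        obtain ⟨hne, he⟩ := hi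
        have hxmem : x ∈ i.1.2 := by rw [he]; exact Sym2.mem_mk_right _ _
        exact hmem i (inS_univ (inr i)) hxmem hne
      calc ((fun i => c (inr i)) '' I2 G x).ncard
          ≤ (↑(A x) : Set (Fin (Δ + 2 * k))).ncard :=
            Set.ncard_le_ncard hsub (Set.toFinite _)
        _ = (A x).card := Set.ncard_coe_finset _
        _ = k := hcard

end VIWork


/-- Let `G` be a finite simple graph with maximum degree `Δ`.
(i) If `G` is outerplanar (hence 2-degenerate), then `χ_{vi,2}(G) ≤ Δ + 4`.
(ii) If `G` is planar (hence 5-degenerate), then `χ_{vi,5}(G) ≤ Δ + 10`. -/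
theorem chiVIS_outerplanar_planar {V : Type*} [Fintype V] [DecidableEq V]
    (G : SimpleGraph V) :
    (Degenerate 2 G → chiVIS G 2 ≤ maxDeg G + 4) ∧
    (Degenerate 5 G → chiVIS G 5 ≤ maxDeg G + 10) := by
  constructor
  · intro hdeg
    obtain ⟨c, hc⟩ := VIWork.main_bound (by norm_num : 2 ≤ 2) hdeg
    exact Nat.sInf_le ⟨c, hc⟩
  · intro hdeg
    obtain ⟨c, hc⟩ := VIWork.main_bound (by norm_num : 2 ≤ 5) hdeg
    exact Nat.sInf_le ⟨c, hc⟩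
end
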